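/- arXiv:1712.07086 — 4 statements merged into one kernel-verified Lean document; each statement's English description precedes it below -/
import Mathlib

section
/- Let G be a finite graph and K a clique of G. Consider the family C of all longest paths P of G such that P crosses K, P 2-touches K, and P is extreme-joined by K. Then the collection of sets {V(P) ∩ K : P ∈ C} has at most two elements; i.e., among the paths in C there are at most two pairwise K-nonequivalent paths. -/
open SimpleGraph

/-- `p` is a longest path of `G`: it is a path, and no path of `G` is longer. -/
def IsLongestPath {V : Type*} (G : SimpleGraph V) {u v : V} (p : G.Walk u v) : Prop :=
  p.IsPath ∧ ∀ ⦃a b : V⦄ (q : G.Walk a b), q.IsPath → q.length ≤ p.length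

/-- `a` and `b` lie in the same connected component of `G - S`: there is a walk from `a`
to `b` avoiding `S`. -/
def ConnAvoiding {V : Type*} (G : SimpleGraph V) (S : Set V) (a b : V) : Prop :=
  ∃ w : G.Walk a b, ∀ x ∈ w.support, x ∉ S

/-- The path `p` crosses `S`: two of its vertices outside `S` lie in different connected
components of `G - S`. -/
def Crosses {V : Type*} (G : SimpleGraph V) (S : Set V) {u v : V} (p : G.Walk u v) : Prop :=
  ∃ a ∈ p.support, ∃ b ∈ p.support, a ∉ S ∧ b ∉ S ∧ ¬ ConnAvoiding G S a b

set_option linter.unusedSectionVars false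
set_option linter.unusedVariables false

section Helpers
variable {V : Type*} [DecidableEq V] {G : SimpleGraph V} {S : Set V} {a b c : V}

lemma CA.symm (h : ConnAvoiding G S a b) : ConnAvoiding G S b a := by
  obtain ⟨w, hw⟩ := h
  exact ⟨w.reverse, by intro x hx; apply hw; simpa [SimpleGraph.Walk.support_reverse] using hx⟩

lemma CA.trans (h1 : ConnAvoiding G S a b) (h2 : ConnAvoiding G S b c) :
    ConnAvoiding G S a c := by
  obtain ⟨w1, hw1⟩ := h1
  obtain ⟨w2, hw2⟩ := h2
  refine ⟨w1.append w2, fun x hx => ?_⟩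
  rcases (SimpleGraph.Walk.mem_support_append_iff _ _).mp hx with h | h
  · exact hw1 x h
  · exact hw2 x h

/-- split disjointness for a path -/
lemma split_disjoint {u v t : V} (p : G.Walk u v) (hp : p.IsPath) (ht : t ∈ p.support) :
    List.Disjoint (p.takeUntil t ht).support (p.dropUntil t ht).support.tail := by
  have h := hp.support_nodup
  rw [← p.take_spec ht, SimpleGraph.Walk.support_append] at h
  exact (List.nodup_append'.mp h).2.2

/-- the end vertex is not in a proper takeUntil -/
lemma end_not_in_take {u v t : V} (p : G.Walk u v) (hp : p.IsPath) (ht : t ∈ p.support)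
    (hne : v ≠ t) : v ∉ (p.takeUntil t ht).support := by
  intro hv
  have hvd : v ∈ (p.dropUntil t ht).support := SimpleGraph.Walk.end_mem_support _
  rw [SimpleGraph.Walk.support_eq_cons] at hvd
  rcases List.mem_cons.mp hvd with h | h
  · exact hne h
  · exact split_disjoint p hp ht hv h

/-- the start vertex is not in a proper dropUntil -/
lemma start_not_in_drop {u v t : V} (p : G.Walk u v) (hp : p.IsPath) (ht : t ∈ p.support)
    (hne : u ≠ t) : u ∉ (p.dropUntil t ht).support := by
  intro hu
  rw [SimpleGraph.Walk.support_eq_cons] at hu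
  rcases List.mem_cons.mp hu with h | h
  · exact hne h
  · exact split_disjoint p hp ht (SimpleGraph.Walk.start_mem_support _) h

/-- any non-S vertex of a path whose only S-vertex can be the endpoint is connected
avoiding S to the start -/
lemma prefix_avoid {u s t : V} (B : G.Walk u s) (hB : B.IsPath)
    (hBS : ∀ k ∈ B.support, k ∈ S → k = s) (ht : t ∈ B.support) (htS : t ∉ S) :
    ConnAvoiding G S u t := by
  refine ⟨B.takeUntil t ht, fun z hz hzS => ?_⟩
  have hzB : z ∈ B.support := B.support_takeUntil_subset ht hz
  have hzs : z = s := hBS z hzB hzS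
  subst hzs
  exact end_not_in_take B hB ht (fun h => htS (h ▸ hzS)) hz

/-- two non-S vertices of a path whose S-vertices are among the two endpoints are
connected avoiding S -/
lemma mid_conn {x y t s : V} (M : G.Walk x y) (hM : M.IsPath)
    (hMS : ∀ k ∈ M.support, k ∈ S → k = x ∨ k = y)
    (ht : t ∈ M.support) (htS : t ∉ S) (hs : s ∈ M.support) (hsS : s ∉ S) :
    ConnAvoiding G S t s := by
  have hxy : x ≠ y ∨ True := Or.inr trivial
  -- every vertex of the support is in the take part or the drop part
  have hcover : s ∈ (M.takeUntil t ht).support ∨ s ∈ (M.dropUntil t ht).support := by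
    conv at hs => rw [← M.take_spec ht]
    exact (SimpleGraph.Walk.mem_support_append_iff _ _).mp hs
  rcases hcover with hcase | hcase
  · -- s is before t : build walk from s to t inside takeUntil
    set T := M.takeUntil t ht with hT
    have hTp : T.IsPath := hM.takeUntil ht
    refine CA.symm ⟨T.dropUntil s hcase, fun z hz hzS => ?_⟩
    have hzT : z ∈ T.support := T.support_dropUntil_subset hcase hz
    have hzM : z ∈ M.support := M.support_takeUntil_subset ht hzT
    rcases hMS z hzM hzS with rfl | rfl
    · -- z = x, start of T, not in dropUntil since x ≠ s
      exact start_not_in_drop T hTp hcase (fun h => hsS (h ▸ hzS)) hz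
    · -- z = y, end of M, not in takeUntil t at all
      exact end_not_in_take M hM ht (fun h => htS (h ▸ hzS)) hzT
  · -- t is before s
    set D := M.dropUntil t ht with hD
    have hDp : D.IsPath := hM.dropUntil ht
    refine ⟨D.takeUntil s hcase, fun z hz hzS => ?_⟩
    have hzD : z ∈ D.support := D.support_takeUntil_subset hcase hz
    have hzM : z ∈ M.support := M.support_dropUntil_subset ht hzD
    rcases hMS z hzM hzS with rfl | rfl
    · -- z = x : x is not in D at all (x ≠ t, and x is the start of M)
      exact start_not_in_drop M hM ht (fun h => htS (h ▸ hzS)) hzD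
    · -- z = y : end of D, not in takeUntil s since y ≠ s
      exact end_not_in_take D hDp hcase (fun h => hsS (h ▸ hzS)) hz

end Helpers

section Cfg
variable {V : Type*} [DecidableEq V]

structure Cfg (G : SimpleGraph V) (K : Finset V) where
  u : V
  v : V
  x : V
  y : V
  w : V
  B₁ : G.Walk u x
  M : G.Walk x y
  B₂ : G.Walk y v
  hx : x ∈ K
  hy : y ∈ K
  hxy : x ≠ y
  hB₁K : ∀ k ∈ B₁.support, k ∈ K → k = x
  hMK : ∀ k ∈ M.support, k ∈ K → k = x ∨ k = y
  hB₂K : ∀ k ∈ B₂.support, k ∈ K → k = y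
  huv : ConnAvoiding G (↑K) u v
  hwM : w ∈ M.support
  hwK : w ∉ K
  hwu : ¬ ConnAvoiding G (↑K) u w
  ndB₁ : B₁.support.Nodup
  ndM : M.support.Nodup
  ndB₂ : B₂.support.Nodup
  dj12 : B₁.support.Disjoint B₂.support
  longest : ∀ ⦃a b : V⦄ (q : G.Walk a b), q.IsPath → q.length ≤ B₁.length + M.length + B₂.length

variable {G : SimpleGraph V} {K : Finset V}

def Cfg.rev (c : Cfg G K) : Cfg G K where
  u := c.v
  v := c.u
  x := c.y
  y := c.x
  w := c.w
  B₁ := c.B₂.reverse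
  M := c.M.reverse
  B₂ := c.B₁.reverse
  hx := c.hy
  hy := c.hx
  hxy := c.hxy.symm
  hB₁K := fun k hk => c.hB₂K k (by simpa [SimpleGraph.Walk.support_reverse] using hk)
  hMK := fun k hk hkK =>
    (c.hMK k (by simpa [SimpleGraph.Walk.support_reverse] using hk) hkK).symm
  hB₂K := fun k hk => c.hB₁K k (by simpa [SimpleGraph.Walk.support_reverse] using hk)
  huv := CA.symm c.huv
  hwM := by simpa [SimpleGraph.Walk.support_reverse] using c.hwM
  hwK := c.hwK
  hwu := fun h => c.hwu (CA.trans c.huv h)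
  ndB₁ := by rw [SimpleGraph.Walk.support_reverse]; exact List.nodup_reverse.mpr c.ndB₂
  ndM := by rw [SimpleGraph.Walk.support_reverse]; exact List.nodup_reverse.mpr c.ndM
  ndB₂ := by rw [SimpleGraph.Walk.support_reverse]; exact List.nodup_reverse.mpr c.ndB₁
  dj12 := by
    rw [SimpleGraph.Walk.support_reverse, SimpleGraph.Walk.support_reverse]
    intro t ht1 ht2
    exact c.dj12 (List.mem_reverse.mp ht2) (List.mem_reverse.mp ht1)
  longest := by
    intro a b q hq
    have := c.longest q hq
    simpa [SimpleGraph.Walk.length_reverse] using this.trans (by omega)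

lemma Cfg.hwx (c : Cfg G K) : c.w ≠ c.x := fun h => c.hwK (h ▸ c.hx)
lemma Cfg.hwy (c : Cfg G K) : c.w ≠ c.y := fun h => c.hwK (h ▸ c.hy)
lemma Cfg.hu (c : Cfg G K) : c.u ∉ K := by
  intro h
  obtain ⟨wk, hwk⟩ := c.huv
  exact hwk c.u (SimpleGraph.Walk.start_mem_support _) h

/-- a non-K vertex on `B₁` is ConnAvoiding to `u` -/
lemma Cfg.connB₁ (c : Cfg G K) {t : V} (ht : t ∈ c.B₁.support) (htK : t ∉ K) :
    ConnAvoiding G (↑K) c.u t :=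
  prefix_avoid c.B₁ ((SimpleGraph.Walk.isPath_def _).mpr c.ndB₁)
    (fun k hk hk2 => c.hB₁K k hk hk2) ht htK

/-- a non-K vertex on `B₂` is ConnAvoiding to `u` -/
lemma Cfg.connB₂ (c : Cfg G K) {t : V} (ht : t ∈ c.B₂.support) (htK : t ∉ K) :
    ConnAvoiding G (↑K) c.u t := by
  have h1 : t ∈ c.rev.B₁.support := by
    show t ∈ c.B₂.reverse.support
    simpa [SimpleGraph.Walk.support_reverse] using ht
  exact CA.trans c.huv (c.rev.connB₁ h1 htK)

/-- a non-K vertex on `M` is ConnAvoiding to `w` -/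
lemma Cfg.connM (c : Cfg G K) {t : V} (ht : t ∈ c.M.support) (htK : t ∉ K) :
    ConnAvoiding G (↑K) t c.w :=
  mid_conn c.M ((SimpleGraph.Walk.isPath_def _).mpr c.ndM)
    (fun k hk hk2 => c.hMK k hk hk2) ht htK c.hwM c.hwK

end Cfg

section Core
variable {V : Type*} [DecidableEq V] {G : SimpleGraph V} {K : Finset V}

lemma Cfg.x_not_tailM (c : Cfg G K) : c.x ∉ c.M.support.tail := by
  have h := c.ndM
  rw [SimpleGraph.Walk.support_eq_cons] at h
  exact (List.nodup_cons.mp h).1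

lemma Cfg.tailM_nodup (c : Cfg G K) : c.M.support.tail.Nodup := by
  have h := c.ndM
  rw [SimpleGraph.Walk.support_eq_cons] at h
  exact (List.nodup_cons.mp h).2

lemma arm_mid (c d : Cfg G K) (hsep : ¬ ConnAvoiding G (↑K) d.u c.w) {t : V}
    (h1 : t ∈ d.B₁.support) (h2 : t ∈ c.M.support) : t ∈ K := by
  by_contra htK
  exact hsep (CA.trans (d.connB₁ h1 htK) (c.connM h2 htK))

lemma arm2_mid (c d : Cfg G K) (hsep : ¬ ConnAvoiding G (↑K) d.u c.w) {t : V}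
    (h1 : t ∈ d.B₂.support) (h2 : t ∈ c.M.support) : t ∈ K := by
  by_contra htK
  exact hsep (CA.trans (d.connB₂ h1 htK) (c.connM h2 htK))

lemma core2 (hK : G.IsClique (↑K)) (c d : Cfg G K)
    (hsep : ¬ ConnAvoiding G (↑K) d.u c.w) (hxx : c.x = d.x) (hyy : c.y ≠ d.y) :
    c.M.length < d.M.length := by
  have hadj : G.Adj c.y d.y := hK (Finset.mem_coe.mpr c.hy) (Finset.mem_coe.mpr d.hy) hyy
  let N : G.Walk d.u d.v :=
    d.B₁.append ((c.M.copy hxx rfl).append (SimpleGraph.Walk.cons hadj d.B₂))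
  have hsupp : N.support = d.B₁.support ++ (c.M.support.tail ++ d.B₂.support) := by
    show (d.B₁.append ((c.M.copy hxx rfl).append (SimpleGraph.Walk.cons hadj d.B₂))).support
      = _
    rw [SimpleGraph.Walk.support_append, SimpleGraph.Walk.support_append,
      SimpleGraph.Walk.support_cons, SimpleGraph.Walk.support_copy, List.tail_cons]
    congr 1
    rw [SimpleGraph.Walk.support_eq_cons (c.M), List.cons_append, List.tail_cons,
      List.tail_cons]
  have hnd : N.support.Nodup := by
    rw [hsupp]
    rw [List.nodup_append', List.nodup_append']
    refine ⟨d.ndB₁, ⟨c.tailM_nodup, d.ndB₂, ?_⟩, ?_⟩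
    · -- tail of M disjoint from B₂ of d
      intro t ht1 ht2
      have htM : t ∈ c.M.support := List.mem_of_mem_tail ht1
      have htK : t ∈ K := arm2_mid c d hsep ht2 htM
      have hty : t = d.y := d.hB₂K t ht2 htK
      rcases c.hMK t htM htK with h | h
      · exact d.hxy (hxx ▸ h ▸ hty)
      · exact hyy (h ▸ hty)
    · -- B₁ of d disjoint from the rest
      intro t ht1 ht2
      rcases List.mem_append.mp ht2 with h | h
      · have htM : t ∈ c.M.support := List.mem_of_mem_tail h
        have htK : t ∈ K := arm_mid c d hsep ht1 htM
        have htx : t = d.x := d.hB₁K t ht1 htK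
        subst htx
        rw [← hxx] at h
        exact c.x_not_tailM h
      · exact d.dj12 ht1 h
  have hpath : N.IsPath := (SimpleGraph.Walk.isPath_def _).mpr hnd
  have hlen := d.longest N hpath
  have : N.length = d.B₁.length + (c.M.length + (1 + d.B₂.length)) := by
    show (d.B₁.append ((c.M.copy hxx rfl).append (SimpleGraph.Walk.cons hadj d.B₂))).length = _
    rw [SimpleGraph.Walk.length_append, SimpleGraph.Walk.length_append,
      SimpleGraph.Walk.length_cons, SimpleGraph.Walk.length_copy]
    omega
  omega

lemma core1 (hK : G.IsClique (↑K)) (c d : Cfg G K)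
    (hsep : ¬ ConnAvoiding G (↑K) d.u c.w)
    (h1 : c.x ≠ d.x) (h2 : c.x ≠ d.y) (h3 : c.y ≠ d.x) (h4 : c.y ≠ d.y) :
    c.M.length < d.M.length := by
  have hadj1 : G.Adj d.x c.x := hK (Finset.mem_coe.mpr d.hx) (Finset.mem_coe.mpr c.hx) h1.symm
  have hadj2 : G.Adj c.y d.y := hK (Finset.mem_coe.mpr c.hy) (Finset.mem_coe.mpr d.hy) h4
  let N : G.Walk d.u d.v :=
    d.B₁.append (SimpleGraph.Walk.cons hadj1 (c.M.append (SimpleGraph.Walk.cons hadj2 d.B₂)))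
  have hsupp : N.support = d.B₁.support ++ (c.M.support ++ d.B₂.support) := by
    show (d.B₁.append (SimpleGraph.Walk.cons hadj1
      (c.M.append (SimpleGraph.Walk.cons hadj2 d.B₂)))).support = _
    rw [SimpleGraph.Walk.support_append, SimpleGraph.Walk.support_cons, List.tail_cons,
      SimpleGraph.Walk.support_append, SimpleGraph.Walk.support_cons, List.tail_cons]
  have hnd : N.support.Nodup := by
    rw [hsupp]
    rw [List.nodup_append', List.nodup_append']
    refine ⟨d.ndB₁, ⟨c.ndM, d.ndB₂, ?_⟩, ?_⟩
    · intro t ht1 ht2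
      have htK : t ∈ K := arm2_mid c d hsep ht2 ht1
      have hty : t = d.y := d.hB₂K t ht2 htK
      rcases c.hMK t ht1 htK with h | h
      · exact h2 (h ▸ hty)
      · exact h4 (h ▸ hty)
    · intro t ht1 ht2
      rcases List.mem_append.mp ht2 with h | h
      · have htK : t ∈ K := arm_mid c d hsep ht1 h
        have htx : t = d.x := d.hB₁K t ht1 htK
        rcases c.hMK t h htK with hh | hh
        · exact h1 (hh ▸ htx)
        · exact h3 (hh ▸ htx)
      · exact d.dj12 ht1 h
  have hpath : N.IsPath := (SimpleGraph.Walk.isPath_def _).mpr hnd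
  have hlen := d.longest N hpath
  have : N.length = d.B₁.length + (1 + (c.M.length + (1 + d.B₂.length))) := by
    show (d.B₁.append (SimpleGraph.Walk.cons hadj1
      (c.M.append (SimpleGraph.Walk.cons hadj2 d.B₂)))).length = _
    rw [SimpleGraph.Walk.length_append, SimpleGraph.Walk.length_cons,
      SimpleGraph.Walk.length_append, SimpleGraph.Walk.length_cons]
    omega
  omega

end Core

section Key
variable {V : Type*} [DecidableEq V] {G : SimpleGraph V} {K : Finset V}

lemma Cfg.rev_sep (d : Cfg G K) {t : V} (hsep : ¬ ConnAvoiding G (↑K) d.u t) :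
    ¬ ConnAvoiding G (↑K) d.rev.u t := fun h => hsep (CA.trans d.huv h)

lemma key (hK : G.IsClique (↑K)) (c d : Cfg G K)
    (hsep : ¬ ConnAvoiding G (↑K) d.u c.w)
    (hne : ({c.x, c.y} : Finset V) ≠ {d.x, d.y}) : c.M.length < d.M.length := by
  by_cases h1 : c.x = d.x
  · have hyy : c.y ≠ d.y := fun h => hne (by rw [h1, h])
    exact core2 hK c d hsep h1 hyy
  · by_cases h2 : c.x = d.y
    · have hyy : c.y ≠ d.x := fun h => hne (by rw [h2, h, Finset.pair_comm])
      have := core2 hK c d.rev (d.rev_sep hsep) h2 hyy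
      simpa [Cfg.rev, SimpleGraph.Walk.length_reverse] using this
    · by_cases h3 : c.y = d.x
      · have := core2 hK c.rev d hsep h3 h2
        simpa [Cfg.rev, SimpleGraph.Walk.length_reverse] using this
      · by_cases h4 : c.y = d.y
        · have := core2 hK c.rev d.rev (d.rev_sep hsep) h4 h1
          simpa [Cfg.rev, SimpleGraph.Walk.length_reverse] using this
        · exact core1 hK c d hsep h1 h2 h3 h4

lemma pairR (hK : G.IsClique (↑K)) (c d : Cfg G K)
    (hne : ({c.x, c.y} : Finset V) ≠ {d.x, d.y}) :
    ConnAvoiding G (↑K) d.u c.w ∨ ConnAvoiding G (↑K) c.u d.w := by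
  by_contra hcon
  push_neg at hcon
  have h1 := key hK c d hcon.1 hne
  have h2 := key hK d c hcon.2 hne.symm
  omega

lemma endgame_aux (hK : G.IsClique (↑K)) (c d e : Cfg G K)
    (hcd : ({c.x, c.y} : Finset V) ≠ {d.x, d.y})
    (hce : ({c.x, c.y} : Finset V) ≠ {e.x, e.y})
    (hde : ({d.x, d.y} : Finset V) ≠ {e.x, e.y})
    (h : ConnAvoiding G (↑K) d.u c.w) : False := by
  by_cases hce' : ConnAvoiding G (↑K) e.u c.w
  · have hdu_eu : ConnAvoiding G (↑K) d.u e.u := CA.trans h (CA.symm hce')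
    by_cases hde' : ConnAvoiding G (↑K) e.u d.w
    · exact d.hwu (CA.trans hdu_eu hde')
    · rcases pairR hK d e hde with h' | h'
      · exact hde' h'
      · exact e.hwu (CA.trans (CA.symm hdu_eu) h')
  · have hmce : c.M.length < e.M.length := key hK c e hce' hce
    have hrec : ConnAvoiding G (↑K) c.u e.w := by
      rcases pairR hK c e hce with h' | h'
      · exact absurd h' hce'
      · exact h'
    by_cases hde' : ConnAvoiding G (↑K) e.u d.w
    · -- three-cycle
      have h5 : ¬ ConnAvoiding G (↑K) c.u d.w := fun hh =>
        e.hwu (CA.trans hde' (CA.trans (CA.symm hh) hrec))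
      have h7 : ¬ ConnAvoiding G (↑K) d.u e.w := fun hh =>
        c.hwu (CA.trans hrec (CA.trans (CA.symm hh) h))
      have hmdc : d.M.length < c.M.length := key hK d c h5 hcd.symm
      have hmed : e.M.length < d.M.length := key hK e d h7 hde.symm
      omega
    · rcases pairR hK d e hde with h' | h'
      · exact hde' h'
      · exact c.hwu (CA.trans hrec (CA.trans (CA.symm h') h))

lemma endgame (hK : G.IsClique (↑K)) (c d e : Cfg G K)
    (hcd : ({c.x, c.y} : Finset V) ≠ {d.x, d.y})
    (hce : ({c.x, c.y} : Finset V) ≠ {e.x, e.y})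
    (hde : ({d.x, d.y} : Finset V) ≠ {e.x, e.y}) : False := by
  rcases pairR hK c d hcd with h | h
  · exact endgame_aux hK c d e hcd hce hde h
  · exact endgame_aux hK d c e hcd.symm hde hce h

end Key




/-- Membership in the family `C` of Lemma 1: `P` is a longest path which contains a
vertex not in `K` and does not contain all of `K`, crosses `K`, 2-touches `K`
(`|V(P) ∩ K| = 2`), and is extreme-joined by `K` (its extremes are not in `K` and lie
in the same component of `G - K`). -/
def InFamilyC {V : Type*} [DecidableEq V] (G : SimpleGraph V) (K : Finset V) {u v : V}
    (P : G.Walk u v) : Prop :=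
  IsLongestPath G P ∧ (∃ a ∈ P.support, a ∉ K) ∧ (∃ x ∈ K, x ∉ P.support) ∧
    Crosses G (↑K) P ∧ (P.support.toFinset ∩ K).card = 2 ∧
    u ∉ K ∧ v ∉ K ∧ ConnAvoiding G (↑K) u v

section Build
variable {V : Type*} [DecidableEq V] {G : SimpleGraph V} {K : Finset V}

lemma decompose {u v x y : V} (P : G.Walk u v) (hx : x ∈ P.support) (hy : y ∈ P.support)
    (hxy : x ≠ y) :
    (∃ (W₁ : G.Walk u x) (W₂ : G.Walk x y) (W₃ : G.Walk y v),
      W₁.append (W₂.append W₃) = P) ∨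
    (∃ (W₁ : G.Walk u y) (W₂ : G.Walk y x) (W₃ : G.Walk x v),
      W₁.append (W₂.append W₃) = P) := by
  by_cases hyD : y ∈ (P.dropUntil x hx).support
  · left
    refine ⟨P.takeUntil x hx, (P.dropUntil x hx).takeUntil y hyD,
      (P.dropUntil x hx).dropUntil y hyD, ?_⟩
    rw [(P.dropUntil x hx).take_spec hyD, P.take_spec hx]
  · have hyT : y ∈ (P.takeUntil x hx).support := by
      have hy' := hy
      rw [← P.take_spec hx] at hy'
      rcases (SimpleGraph.Walk.mem_support_append_iff _ _).mp hy' with h | h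
      · exact h
      · exact absurd h hyD
    right
    refine ⟨(P.takeUntil x hx).takeUntil y hyT, (P.takeUntil x hx).dropUntil y hyT,
      P.dropUntil x hx, ?_⟩
    have h2 : (((P.takeUntil x hx).takeUntil y hyT).append
        ((P.takeUntil x hx).dropUntil y hyT)).append (P.dropUntil x hx) = P := by
      rw [(P.takeUntil x hx).take_spec hyT, P.take_spec hx]
    rw [← SimpleGraph.Walk.append_assoc] at h2
    exact h2

lemma assemble {u v x y : V} {W₁ : G.Walk u x} {W₂ : G.Walk x y} {W₃ : G.Walk y v}
    (hpath : (W₁.append (W₂.append W₃)).IsPath)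
    (hlong : ∀ ⦃a b : V⦄ (q : G.Walk a b), q.IsPath →
      q.length ≤ (W₁.append (W₂.append W₃)).length)
    (hxK : x ∈ K) (hyK : y ∈ K) (hxy : x ≠ y)
    (hall : ∀ k ∈ (W₁.append (W₂.append W₃)).support, k ∈ K → k = x ∨ k = y)
    (huv : ConnAvoiding G (↑K) u v)
    (hcross : Crosses G (↑K) (W₁.append (W₂.append W₃))) :
    ∃ c : Cfg G K, c.x = x ∧ c.y = y := by
  have hsupp : (W₁.append (W₂.append W₃)).support
      = W₁.support ++ (W₂.support.tail ++ W₃.support.tail) := by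
    rw [SimpleGraph.Walk.support_append, SimpleGraph.Walk.support_append,
      SimpleGraph.Walk.support_eq_cons W₂, List.cons_append, List.tail_cons, List.tail_cons]
  have hnd : (W₁.support ++ (W₂.support.tail ++ W₃.support.tail)).Nodup := by
    rw [← hsupp]; exact hpath.support_nodup
  rw [List.nodup_append', List.nodup_append'] at hnd
  obtain ⟨nd1, ⟨nd2t, nd3t, d23⟩, d1r⟩ := hnd
  have hyW₂t : y ∈ W₂.support.tail := by
    have h := SimpleGraph.Walk.end_mem_support W₂
    rw [SimpleGraph.Walk.support_eq_cons] at h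
    rcases List.mem_cons.mp h with h | h
    · exact absurd h.symm hxy
    · exact h
  have hyW₁ : y ∉ W₁.support := fun h => d1r h (List.mem_append_left _ hyW₂t)
  have hxW₁ : x ∈ W₁.support := SimpleGraph.Walk.end_mem_support W₁
  have hxW₂t : x ∉ W₂.support.tail := fun h => d1r hxW₁ (List.mem_append_left _ h)
  have hxW₃t : x ∉ W₃.support.tail := fun h => d1r hxW₁ (List.mem_append_right _ h)
  have hyW₃t : y ∉ W₃.support.tail := fun h => d23 hyW₂t h
  have ndM : W₂.support.Nodup := by
    rw [SimpleGraph.Walk.support_eq_cons]; exact List.nodup_cons.mpr ⟨hxW₂t, nd2t⟩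
  have ndB₂ : W₃.support.Nodup := by
    rw [SimpleGraph.Walk.support_eq_cons]; exact List.nodup_cons.mpr ⟨hyW₃t, nd3t⟩
  have dj12 : W₁.support.Disjoint W₃.support := by
    intro t ht1 ht2
    rw [SimpleGraph.Walk.support_eq_cons] at ht2
    rcases List.mem_cons.mp ht2 with rfl | h
    · exact hyW₁ ht1
    · exact d1r ht1 (List.mem_append_right _ h)
  -- membership transfers into the full support
  have memfull : ∀ t, (t ∈ W₁.support ∨ t ∈ W₂.support ∨ t ∈ W₃.support) →
      t ∈ (W₁.append (W₂.append W₃)).support := by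
    intro t ht
    rw [hsupp]
    rcases ht with h | h | h
    · exact List.mem_append_left _ h
    · rw [SimpleGraph.Walk.support_eq_cons] at h
      rcases List.mem_cons.mp h with rfl | h
      · exact List.mem_append_left _ hxW₁
      · exact List.mem_append_right _ (List.mem_append_left _ h)
    · rw [SimpleGraph.Walk.support_eq_cons] at h
      rcases List.mem_cons.mp h with rfl | h
      · exact List.mem_append_right _ (List.mem_append_left _ hyW₂t)
      · exact List.mem_append_right _ (List.mem_append_right _ h)
  have hB₁K : ∀ k ∈ W₁.support, k ∈ K → k = x := by
    intro k hk hkK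
    rcases hall k (memfull k (Or.inl hk)) hkK with h | h
    · exact h
    · exact absurd (h ▸ hk) hyW₁
  have hMK : ∀ k ∈ W₂.support, k ∈ K → k = x ∨ k = y := fun k hk hkK =>
    hall k (memfull k (Or.inr (Or.inl hk))) hkK
  have hB₂K : ∀ k ∈ W₃.support, k ∈ K → k = y := by
    intro k hk hkK
    rcases hall k (memfull k (Or.inr (Or.inr hk))) hkK with h | h
    · subst h
      rw [SimpleGraph.Walk.support_eq_cons] at hk
      rcases List.mem_cons.mp hk with h | h
      · exact absurd h hxy
      · exact absurd h hxW₃t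
    · exact h
  -- locate non-K vertices
  have connW₃ : ∀ t ∈ W₃.support, t ∉ (↑K : Set V) → ConnAvoiding G (↑K) u t := by
    intro t ht htK
    refine CA.trans huv (prefix_avoid W₃.reverse ?_ ?_ ?_ htK)
    · exact (SimpleGraph.Walk.isPath_def _).mpr
        (by rw [SimpleGraph.Walk.support_reverse]; exact List.nodup_reverse.mpr ndB₂)
    · intro k hk hkK
      exact hB₂K k (by simpa [SimpleGraph.Walk.support_reverse] using hk) hkK
    · simpa [SimpleGraph.Walk.support_reverse] using ht
  have loc : ∀ t ∈ (W₁.append (W₂.append W₃)).support, t ∉ (↑K : Set V) →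
      ConnAvoiding G (↑K) u t ∨ t ∈ W₂.support := by
    intro t ht htK
    rw [hsupp] at ht
    rcases List.mem_append.mp ht with h | h
    · exact Or.inl (prefix_avoid W₁ ((SimpleGraph.Walk.isPath_def _).mpr nd1)
        (fun k hk hkK => hB₁K k hk hkK) h htK)
    · rcases List.mem_append.mp h with h | h
      · exact Or.inr (List.mem_of_mem_tail h)
      · exact Or.inl (connW₃ t (List.mem_of_mem_tail h) htK)
  obtain ⟨α, hα, β, hβ, hαK, hβK, hαβ⟩ := hcross
  have hwit : ∃ w, w ∈ W₂.support ∧ w ∉ (↑K : Set V) ∧ ¬ ConnAvoiding G (↑K) u w := by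
    by_cases hα' : ConnAvoiding G (↑K) u α
    · have hβ' : ¬ ConnAvoiding G (↑K) u β := fun h => hαβ (CA.trans (CA.symm hα') h)
      rcases loc β hβ hβK with h | h
      · exact absurd h hβ'
      · exact ⟨β, h, hβK, hβ'⟩
    · rcases loc α hα hαK with h | h
      · exact absurd h hα'
      · exact ⟨α, h, hαK, hα'⟩
  obtain ⟨w, hwM, hwK, hwu⟩ := hwit
  have hlong' : ∀ ⦃a b : V⦄ (q : G.Walk a b), q.IsPath →
      q.length ≤ W₁.length + W₂.length + W₃.length := by
    intro a b q hq
    have := hlong q hq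
    rwa [SimpleGraph.Walk.length_append, SimpleGraph.Walk.length_append, ← Nat.add_assoc]
      at this
  exact ⟨⟨u, v, x, y, w, W₁, W₂, W₃, hxK, hyK, hxy, hB₁K, hMK, hB₂K, huv, hwM,
    (by simpa using hwK), hwu, nd1, ndM, ndB₂, dj12, hlong'⟩, rfl, rfl⟩

lemma buildCfg {u v : V} {P : G.Walk u v} (hP : InFamilyC G K P) :
    ∃ c : Cfg G K, P.support.toFinset ∩ K = {c.x, c.y} := by
  obtain ⟨⟨hpath, hlong⟩, -, -, hcross, hcard, huK, hvK, huv⟩ := hP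
  obtain ⟨x, y, hxy, hset⟩ := Finset.card_eq_two.mp hcard
  have hxmem : x ∈ P.support.toFinset ∩ K := hset ▸ Finset.mem_insert_self x {y}
  have hymem : y ∈ P.support.toFinset ∩ K := hset ▸ Finset.mem_insert_of_mem
    (Finset.mem_singleton_self y)
  have hxP : x ∈ P.support := List.mem_toFinset.mp (Finset.mem_inter.mp hxmem).1
  have hyP : y ∈ P.support := List.mem_toFinset.mp (Finset.mem_inter.mp hymem).1
  have hxK : x ∈ K := (Finset.mem_inter.mp hxmem).2
  have hyK : y ∈ K := (Finset.mem_inter.mp hymem).2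
  have hall : ∀ k ∈ P.support, k ∈ K → k = x ∨ k = y := by
    intro k hk hkK
    have : k ∈ P.support.toFinset ∩ K :=
      Finset.mem_inter.mpr ⟨List.mem_toFinset.mpr hk, hkK⟩
    rw [hset] at this
    simpa using this
  rcases decompose P hxP hyP hxy with ⟨W₁, W₂, W₃, he⟩ | ⟨W₁, W₂, W₃, he⟩
  · obtain ⟨c, hcx, hcy⟩ := assemble (he ▸ hpath) (fun a b q hq => he ▸ hlong q hq)
      hxK hyK hxy (fun k hk => hall k (he ▸ hk)) huv (he ▸ hcross)
    exact ⟨c, by rw [hset, hcx, hcy]⟩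
  · obtain ⟨c, hcx, hcy⟩ := assemble (he ▸ hpath) (fun a b q hq => he ▸ hlong q hq)
      hyK hxK hxy.symm (fun k hk hkK => (hall k (he ▸ hk) hkK).symm) huv (he ▸ hcross)
    exact ⟨c, by rw [hset, hcx, hcy, Finset.pair_comm]⟩

end Build

/-- Among the longest paths of `G` that cross a clique `K`, 2-touch `K`, and are
extreme-joined by `K`, there are at most two pairwise `K`-nonequivalent paths: among
any three such paths, two of them intersect `K` in the same set of vertices. -/
theorem at_most_two_nonequivalent_extreme_joined {V : Type*} [Fintype V] [DecidableEq V]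
    (G : SimpleGraph V) (K : Finset V) (hK : G.IsClique (↑K))
    ⦃u₁ v₁ u₂ v₂ u₃ v₃ : V⦄ (P : G.Walk u₁ v₁) (Q : G.Walk u₂ v₂) (R : G.Walk u₃ v₃)
    (hP : InFamilyC G K P) (hQ : InFamilyC G K Q) (hR : InFamilyC G K R) :
    P.support.toFinset ∩ K = Q.support.toFinset ∩ K ∨
    P.support.toFinset ∩ K = R.support.toFinset ∩ K ∨
    Q.support.toFinset ∩ K = R.support.toFinset ∩ K := by
  obtain ⟨c, hc⟩ := buildCfg hP
  obtain ⟨d, hd⟩ := buildCfg hQ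
  obtain ⟨e, he⟩ := buildCfg hR
  by_contra hcon
  push_neg at hcon
  obtain ⟨h1, h2, h3⟩ := hcon
  rw [hc, hd] at h1
  rw [hc, he] at h2
  rw [hd, he] at h3
  exact endgame hK c d e h1 h2 h3
end

section
/- Let G be a finite graph and K a clique of G. Let P and Q be two longest paths of G such that each of them is extreme-separated by K and each of them touches K at most twice (i.e., |V(P) ∩ K| ≤ 2 and |V(Q) ∩ K| ≤ 2). Then V(P) ∩ V(Q) ∩ K ≠ ∅; that is, P and Q have a common vertex belonging to K. -/
open SimpleGraph

/-- The path `p` (from `u` to `v`), which contains a vertex not in `S` and does not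
contain all of `S`, is extreme-separated by `S`: it crosses `S`, neither extreme lies in
`S`, and its extremes lie in different components of `G - S`. -/
def ExtremeSeparated {V : Type*} (G : SimpleGraph V) (S : Set V) {u v : V}
    (p : G.Walk u v) : Prop :=
  (∃ a ∈ p.support, a ∉ S) ∧ (∃ x ∈ S, x ∉ p.support) ∧ Crosses G S p ∧
    u ∉ S ∧ v ∉ S ∧ ¬ ConnAvoiding G S u v

namespace ESMIC


variable {V : Type*} [DecidableEq V] {G : SimpleGraph V} {S : Set V}

lemma conn_symm {a b : V} (h : ConnAvoiding G S a b) : ConnAvoiding G S b a := by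
  obtain ⟨w, hw⟩ := h
  exact ⟨w.reverse, fun x hx => hw x (by simpa [Walk.support_reverse] using hx)⟩

lemma conn_trans {a b c : V} (h1 : ConnAvoiding G S a b) (h2 : ConnAvoiding G S b c) :
    ConnAvoiding G S a c := by
  obtain ⟨w1, hw1⟩ := h1
  obtain ⟨w2, hw2⟩ := h2
  refine ⟨w1.append w2, fun x hx => ?_⟩
  rcases (Walk.mem_support_append_iff _ _).1 hx with h | h
  · exact hw1 x h
  · exact hw2 x h

lemma exists_first {x y : V} (p : G.Walk x y) (h : ∃ z ∈ p.support, z ∈ S) :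
    ∃ a, a ∈ S ∧ ∃ (p₁ : G.Walk x a) (p₂ : G.Walk a y),
      p = p₁.append p₂ ∧ ∀ z ∈ p₁.support, z ∈ S → z = a := by
  induction p with
  | nil =>
    obtain ⟨z, hz, hzS⟩ := h
    simp only [Walk.support_nil, List.mem_singleton] at hz
    subst hz
    exact ⟨z, hzS, Walk.nil, Walk.nil, rfl, by simp⟩
  | cons e q ih =>
    rename_i u v w
    by_cases hu : u ∈ S
    · exact ⟨u, hu, Walk.nil, Walk.cons e q, rfl, by simp⟩
    · have h' : ∃ z ∈ q.support, z ∈ S := by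
        obtain ⟨z, hz, hzS⟩ := h
        rw [Walk.support_cons, List.mem_cons] at hz
        rcases hz with rfl | hz
        · exact absurd hzS hu
        · exact ⟨z, hz, hzS⟩
      obtain ⟨a, haS, q₁, q₂, hq, honly⟩ := ih h'
      refine ⟨a, haS, Walk.cons e q₁, q₂, by rw [Walk.cons_append, ← hq], ?_⟩
      intro z hz hzS
      rw [Walk.support_cons, List.mem_cons] at hz
      rcases hz with rfl | hz
      · exact absurd hzS hu
      · exact honly z hz hzS

/-- If `p₁ ++ p₂` is a path, the only common vertex of the two pieces is the middle. -/
lemma mem_both {x a y : V} {p₁ : G.Walk x a} {p₂ : G.Walk a y}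
    (hp : (p₁.append p₂).IsPath) {z : V} (h1 : z ∈ p₁.support) (h2 : z ∈ p₂.support) :
    z = a := by
  have hnd := hp.2
  rw [Walk.support_append, List.nodup_append] at hnd
  rcases (by rw [Walk.support_eq_cons p₂] at h2; exact List.mem_cons.1 h2) with rfl | h2'
  · rfl
  · exact absurd rfl (hnd.2.2 z h1 z h2')

lemma reach {s t : V} (p : G.Walk s t) (hp : p.IsPath)
    (honly : ∀ z ∈ p.support, z ∈ S → z = t) {x : V} (hx : x ∈ p.support) (hxS : x ∉ S) :
    ConnAvoiding G S s x := by
  refine ⟨p.takeUntil x hx, fun z hz => ?_⟩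
  intro hzS
  have hz' := honly z (p.support_takeUntil_subset hx hz) hzS
  have ht : z ∈ (p.dropUntil x hx).support := by rw [hz']; exact Walk.end_mem_support _
  have hzx := mem_both (by rwa [Walk.take_spec p hx]) hz ht
  exact hxS (hzx ▸ hzS)

lemma same {a b : V} (p : G.Walk a b) (hp : p.IsPath) (haS : a ∈ S) (hbS : b ∈ S)
    (honly : ∀ z ∈ p.support, z ∈ S → z = a ∨ z = b) {x y : V}
    (hx : x ∈ p.support) (hy : y ∈ p.support) (hxS : x ∉ S) (hyS : y ∉ S) :
    ConnAvoiding G S x y := by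
  by_cases hyd : y ∈ (p.dropUntil x hx).support
  · refine reach (p.dropUntil x hx) (hp.dropUntil hx) ?_ hyd hyS
    intro z hz hzS
    rcases honly z (p.support_dropUntil_subset hx hz) hzS with h | h
    · have ha' : a ∈ (p.dropUntil x hx).support := h ▸ hz
      have := mem_both (by rwa [Walk.take_spec p hx]) (Walk.start_mem_support _) ha'
      exact absurd (h ▸ hzS : a ∈ S) (this ▸ hxS)
    · exact h
  · have hyt : y ∈ (p.takeUntil x hx).support := by
      rw [← Walk.take_spec p hx, Walk.mem_support_append_iff] at hy
      exact hy.resolve_right hyd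
    refine reach (p.takeUntil x hx).reverse (hp.takeUntil hx).reverse ?_
      (by rwa [Walk.support_reverse, List.mem_reverse]) hyS
    intro z hz hzS
    rw [Walk.support_reverse, List.mem_reverse] at hz
    rcases honly z (p.support_takeUntil_subset hx hz) hzS with h | h
    · exact h
    · have hb' : b ∈ (p.takeUntil x hx).support := h ▸ hz
      have := mem_both (by rwa [Walk.take_spec p hx]) hb' (Walk.end_mem_support _)
      exact absurd (h ▸ hzS : b ∈ S) (this ▸ hxS)

lemma join_bound (hK : G.IsClique S) {L : ℕ}
    (hbound : ∀ ⦃c d : V⦄ (q : G.Walk c d), q.IsPath → q.length ≤ L)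
    {s a t b : V} (w : G.Walk s a) (x : G.Walk t b) (hw : w.IsPath) (hx : x.IsPath)
    (ha : a ∈ S) (hb : b ∈ S) (hab : a ≠ b) (hd : ∀ z ∈ w.support, z ∉ x.support) :
    w.length + x.length + 1 ≤ L := by
  have e : G.Adj a b := hK ha hb hab
  have hW : (w.append (Walk.cons e x.reverse)).IsPath := by
    rw [Walk.isPath_def, Walk.support_append, Walk.support_cons, List.tail_cons,
      List.nodup_append]
    refine ⟨hw.2, ?_, ?_⟩
    · rw [← Walk.isPath_def] at *
      exact hx.reverse
    · intro z hz z' hz' hzz'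
      subst hzz'
      rw [Walk.support_reverse, List.mem_reverse] at hz'
      exact hd z hz hz'
  have := hbound _ hW
  rw [Walk.length_append, Walk.length_cons, Walk.length_reverse] at this
  omega

lemma disj2 {r₁ r₂ s₁ s₂ : V} {s a t b : V} {w : G.Walk s a} {x : G.Walk t b}
    {PS QS : List V}
    (hwsub : ∀ z ∈ w.support, z ∈ PS) (hxsub : ∀ z ∈ x.support, z ∈ QS)
    (hcon : ∀ z ∈ S, z ∈ PS → z ∈ QS → False)
    (covW : ∀ z ∈ w.support, z ∉ S → ConnAvoiding G S r₁ z ∨ ConnAvoiding G S r₂ z)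
    (covX : ∀ z ∈ x.support, z ∉ S → ConnAvoiding G S s₁ z ∨ ConnAvoiding G S s₂ z)
    (h11 : ¬ ConnAvoiding G S r₁ s₁) (h12 : ¬ ConnAvoiding G S r₁ s₂)
    (h21 : ¬ ConnAvoiding G S r₂ s₁) (h22 : ¬ ConnAvoiding G S r₂ s₂) :
    ∀ z ∈ w.support, z ∉ x.support := by
  intro z hz hz'
  by_cases hzS : z ∈ S
  · exact hcon z hzS (hwsub z hz) (hxsub z hz')
  · rcases covW z hz hzS with c1 | c1 <;> rcases covX z hz' hzS with c2 | c2
    · exact h11 (conn_trans c1 (conn_symm c2))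
    · exact h12 (conn_trans c1 (conn_symm c2))
    · exact h21 (conn_trans c1 (conn_symm c2))
    · exact h22 (conn_trans c1 (conn_symm c2))


lemma selection {α : Sort*} (R : α → α → Prop)
    (hsym : ∀ {a b}, R a b → R b a) (htr : ∀ {a b c}, R a b → R b c → R a c)
    (x1 x2 x3 y1 y2 y3 : α) (hx : ¬ R x1 x2) (hy : ¬ R y1 y2) :
    (¬R x1 y1 ∧ ¬R x2 y2 ∧ ¬R x2 y3 ∧ ¬R x3 y2 ∧ ¬R x3 y3) ∨
    (¬R x1 y2 ∧ ¬R x1 y3 ∧ ¬R x2 y1 ∧ ¬R x3 y1) ∨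
    (¬R x1 y1 ∧ ¬R x1 y3 ∧ ¬R x3 y1 ∧ ¬R x3 y3 ∧ ¬R x2 y2) ∨
    (¬R x1 y2 ∧ ¬R x3 y2 ∧ ¬R x2 y1 ∧ ¬R x2 y3) ∨
    (¬R x1 y1 ∧ ¬R x1 y3 ∧ ¬R x2 y2 ∧ ¬R x3 y2) ∨
    (¬R x1 y2 ∧ ¬R x2 y1 ∧ ¬R x2 y3 ∧ ¬R x3 y1 ∧ ¬R x3 y3) ∨
    (¬R x1 y1 ∧ ¬R x3 y1 ∧ ¬R x2 y2 ∧ ¬R x2 y3) ∨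
    (¬R x1 y2 ∧ ¬R x1 y3 ∧ ¬R x3 y2 ∧ ¬R x3 y3 ∧ ¬R x2 y1) := by
  classical
  by_cases h11 : R x1 y1
  · by_cases h12 : R x1 y2
    · exact absurd (htr (hsym h11) h12) hy
    · by_cases h21 : R x2 y1
      · exact absurd (htr h11 (hsym h21)) hx
      · by_cases h22 : R x2 y2
        · by_cases h13 : R x1 y3
          · by_cases h31 : R x3 y1
            · by_cases h23 : R x2 y3
              · exact absurd (htr h13 (hsym h23)) hx
              · by_cases h32 : R x3 y2
                · exact absurd (htr (hsym h31) h32) hy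
                · exact Or.inr (Or.inr (Or.inr (Or.inl ⟨h12, h32, h21, h23⟩)))
            · by_cases h23 : R x2 y3
              · exact absurd (htr h13 (hsym h23)) hx
              · by_cases h32 : R x3 y2
                · by_cases h33 : R x3 y3
                  · exact absurd (htr (htr h33 (hsym h13)) h11) h31
                  · exact Or.inr (Or.inr (Or.inr (Or.inr (Or.inr (Or.inl ⟨h12, h21, h23, h31, h33⟩)))))
                · exact Or.inr (Or.inr (Or.inr (Or.inl ⟨h12, h32, h21, h23⟩)))
          · by_cases h31 : R x3 y1
            · by_cases h23 : R x2 y3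
              · by_cases h32 : R x3 y2
                · exact absurd (htr (hsym h31) h32) hy
                · by_cases h33 : R x3 y3
                  · exact absurd (htr (htr h11 (hsym h31)) h33) h13
                  · exact Or.inr (Or.inr (Or.inr (Or.inr (Or.inr (Or.inr (Or.inr (⟨h12, h13, h32, h33, h21⟩)))))))
              · by_cases h32 : R x3 y2
                · exact absurd (htr (hsym h31) h32) hy
                · exact Or.inr (Or.inr (Or.inr (Or.inl ⟨h12, h32, h21, h23⟩)))
            · exact Or.inr (Or.inl ⟨h12, h13, h21, h31⟩)
        · by_cases h13 : R x1 y3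
          · by_cases h31 : R x3 y1
            · by_cases h23 : R x2 y3
              · exact absurd (htr h13 (hsym h23)) hx
              · by_cases h32 : R x3 y2
                · exact absurd (htr (hsym h31) h32) hy
                · exact Or.inr (Or.inr (Or.inr (Or.inl ⟨h12, h32, h21, h23⟩)))
            · by_cases h23 : R x2 y3
              · exact absurd (htr h13 (hsym h23)) hx
              · by_cases h32 : R x3 y2
                · by_cases h33 : R x3 y3
                  · exact absurd (htr (htr h33 (hsym h13)) h11) h31
                  · exact Or.inr (Or.inr (Or.inr (Or.inr (Or.inr (Or.inl ⟨h12, h21, h23, h31, h33⟩)))))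
                · exact Or.inr (Or.inr (Or.inr (Or.inl ⟨h12, h32, h21, h23⟩)))
          · by_cases h31 : R x3 y1
            · by_cases h23 : R x2 y3
              · by_cases h32 : R x3 y2
                · exact absurd (htr (hsym h31) h32) hy
                · by_cases h33 : R x3 y3
                  · exact absurd (htr (htr h11 (hsym h31)) h33) h13
                  · exact Or.inr (Or.inr (Or.inr (Or.inr (Or.inr (Or.inr (Or.inr (⟨h12, h13, h32, h33, h21⟩)))))))
              · by_cases h32 : R x3 y2
                · exact absurd (htr (hsym h31) h32) hy
                · exact Or.inr (Or.inr (Or.inr (Or.inl ⟨h12, h32, h21, h23⟩)))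
            · exact Or.inr (Or.inl ⟨h12, h13, h21, h31⟩)
  · by_cases h12 : R x1 y2
    · by_cases h21 : R x2 y1
      · by_cases h22 : R x2 y2
        · exact absurd (htr h12 (hsym h22)) hx
        · by_cases h13 : R x1 y3
          · by_cases h31 : R x3 y1
            · by_cases h23 : R x2 y3
              · exact absurd (htr h13 (hsym h23)) hx
              · by_cases h32 : R x3 y2
                · exact absurd (htr (hsym h31) h32) hy
                · by_cases h33 : R x3 y3
                  · exact absurd (htr (htr h33 (hsym h13)) h12) h32
                  · exact Or.inl ⟨h11, h22, h23, h32, h33⟩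
            · by_cases h23 : R x2 y3
              · exact absurd (htr h13 (hsym h23)) hx
              · exact Or.inr (Or.inr (Or.inr (Or.inr (Or.inr (Or.inr (Or.inl ⟨h11, h31, h22, h23⟩))))))
          · by_cases h31 : R x3 y1
            · by_cases h23 : R x2 y3
              · by_cases h32 : R x3 y2
                · exact absurd (htr (hsym h31) h32) hy
                · exact Or.inr (Or.inr (Or.inr (Or.inr (Or.inl ⟨h11, h13, h22, h32⟩))))
              · by_cases h32 : R x3 y2
                · exact absurd (htr (hsym h31) h32) hy
                · exact Or.inr (Or.inr (Or.inr (Or.inr (Or.inl ⟨h11, h13, h22, h32⟩))))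
            · by_cases h23 : R x2 y3
              · by_cases h32 : R x3 y2
                · by_cases h33 : R x3 y3
                  · exact absurd (htr (htr h12 (hsym h32)) h33) h13
                  · exact Or.inr (Or.inr (Or.inl ⟨h11, h13, h31, h33, h22⟩))
                · exact Or.inr (Or.inr (Or.inr (Or.inr (Or.inl ⟨h11, h13, h22, h32⟩))))
              · exact Or.inr (Or.inr (Or.inr (Or.inr (Or.inr (Or.inr (Or.inl ⟨h11, h31, h22, h23⟩))))))
      · by_cases h22 : R x2 y2
        · exact absurd (htr h12 (hsym h22)) hx
        · by_cases h13 : R x1 y3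
          · by_cases h31 : R x3 y1
            · by_cases h23 : R x2 y3
              · exact absurd (htr h13 (hsym h23)) hx
              · by_cases h32 : R x3 y2
                · exact absurd (htr (hsym h31) h32) hy
                · by_cases h33 : R x3 y3
                  · exact absurd (htr (htr h33 (hsym h13)) h12) h32
                  · exact Or.inl ⟨h11, h22, h23, h32, h33⟩
            · by_cases h23 : R x2 y3
              · exact absurd (htr h13 (hsym h23)) hx
              · exact Or.inr (Or.inr (Or.inr (Or.inr (Or.inr (Or.inr (Or.inl ⟨h11, h31, h22, h23⟩))))))
          · by_cases h31 : R x3 y1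
            · by_cases h23 : R x2 y3
              · by_cases h32 : R x3 y2
                · exact absurd (htr (hsym h31) h32) hy
                · exact Or.inr (Or.inr (Or.inr (Or.inr (Or.inl ⟨h11, h13, h22, h32⟩))))
              · by_cases h32 : R x3 y2
                · exact absurd (htr (hsym h31) h32) hy
                · exact Or.inr (Or.inr (Or.inr (Or.inr (Or.inl ⟨h11, h13, h22, h32⟩))))
            · by_cases h23 : R x2 y3
              · by_cases h32 : R x3 y2
                · by_cases h33 : R x3 y3
                  · exact absurd (htr (htr h12 (hsym h32)) h33) h13
                  · exact Or.inr (Or.inr (Or.inl ⟨h11, h13, h31, h33, h22⟩))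
                · exact Or.inr (Or.inr (Or.inr (Or.inr (Or.inl ⟨h11, h13, h22, h32⟩))))
              · exact Or.inr (Or.inr (Or.inr (Or.inr (Or.inr (Or.inr (Or.inl ⟨h11, h31, h22, h23⟩))))))
    · by_cases h21 : R x2 y1
      · by_cases h22 : R x2 y2
        · exact absurd (htr (hsym h21) h22) hy
        · by_cases h13 : R x1 y3
          · by_cases h31 : R x3 y1
            · by_cases h23 : R x2 y3
              · exact absurd (htr h13 (hsym h23)) hx
              · by_cases h32 : R x3 y2
                · exact absurd (htr (hsym h31) h32) hy
                · by_cases h33 : R x3 y3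
                  · exact absurd (htr (htr h13 (hsym h33)) h31) h11
                  · exact Or.inl ⟨h11, h22, h23, h32, h33⟩
            · by_cases h23 : R x2 y3
              · exact absurd (htr h13 (hsym h23)) hx
              · exact Or.inr (Or.inr (Or.inr (Or.inr (Or.inr (Or.inr (Or.inl ⟨h11, h31, h22, h23⟩))))))
          · by_cases h31 : R x3 y1
            · by_cases h23 : R x2 y3
              · by_cases h32 : R x3 y2
                · exact absurd (htr (hsym h31) h32) hy
                · exact Or.inr (Or.inr (Or.inr (Or.inr (Or.inl ⟨h11, h13, h22, h32⟩))))
              · by_cases h32 : R x3 y2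
                · exact absurd (htr (hsym h31) h32) hy
                · exact Or.inr (Or.inr (Or.inr (Or.inr (Or.inl ⟨h11, h13, h22, h32⟩))))
            · by_cases h23 : R x2 y3
              · by_cases h32 : R x3 y2
                · by_cases h33 : R x3 y3
                  · exact absurd (htr (htr h33 (hsym h23)) h21) h31
                  · exact Or.inr (Or.inr (Or.inl ⟨h11, h13, h31, h33, h22⟩))
                · exact Or.inr (Or.inr (Or.inr (Or.inr (Or.inl ⟨h11, h13, h22, h32⟩))))
              · exact Or.inr (Or.inr (Or.inr (Or.inr (Or.inr (Or.inr (Or.inl ⟨h11, h31, h22, h23⟩))))))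
      · by_cases h22 : R x2 y2
        · by_cases h13 : R x1 y3
          · by_cases h31 : R x3 y1
            · by_cases h23 : R x2 y3
              · exact absurd (htr h13 (hsym h23)) hx
              · by_cases h32 : R x3 y2
                · exact absurd (htr (hsym h31) h32) hy
                · exact Or.inr (Or.inr (Or.inr (Or.inl ⟨h12, h32, h21, h23⟩)))
            · by_cases h23 : R x2 y3
              · exact absurd (htr h13 (hsym h23)) hx
              · by_cases h32 : R x3 y2
                · by_cases h33 : R x3 y3
                  · exact absurd (htr (htr h13 (hsym h33)) h32) h12
                  · exact Or.inr (Or.inr (Or.inr (Or.inr (Or.inr (Or.inl ⟨h12, h21, h23, h31, h33⟩)))))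
                · exact Or.inr (Or.inr (Or.inr (Or.inl ⟨h12, h32, h21, h23⟩)))
          · by_cases h31 : R x3 y1
            · by_cases h23 : R x2 y3
              · by_cases h32 : R x3 y2
                · exact absurd (htr (hsym h31) h32) hy
                · by_cases h33 : R x3 y3
                  · exact absurd (htr (htr h33 (hsym h23)) h22) h32
                  · exact Or.inr (Or.inr (Or.inr (Or.inr (Or.inr (Or.inr (Or.inr (⟨h12, h13, h32, h33, h21⟩)))))))
              · by_cases h32 : R x3 y2
                · exact absurd (htr (hsym h31) h32) hy
                · exact Or.inr (Or.inr (Or.inr (Or.inl ⟨h12, h32, h21, h23⟩)))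
            · exact Or.inr (Or.inl ⟨h12, h13, h21, h31⟩)
        · by_cases h13 : R x1 y3
          · by_cases h31 : R x3 y1
            · by_cases h23 : R x2 y3
              · exact absurd (htr h13 (hsym h23)) hx
              · by_cases h32 : R x3 y2
                · exact absurd (htr (hsym h31) h32) hy
                · exact Or.inr (Or.inr (Or.inr (Or.inl ⟨h12, h32, h21, h23⟩)))
            · by_cases h23 : R x2 y3
              · exact absurd (htr h13 (hsym h23)) hx
              · exact Or.inr (Or.inr (Or.inr (Or.inr (Or.inr (Or.inr (Or.inl ⟨h11, h31, h22, h23⟩))))))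
          · by_cases h31 : R x3 y1
            · by_cases h23 : R x2 y3
              · by_cases h32 : R x3 y2
                · exact absurd (htr (hsym h31) h32) hy
                · exact Or.inr (Or.inr (Or.inr (Or.inr (Or.inl ⟨h11, h13, h22, h32⟩))))
              · by_cases h32 : R x3 y2
                · exact absurd (htr (hsym h31) h32) hy
                · exact Or.inr (Or.inr (Or.inr (Or.inl ⟨h12, h32, h21, h23⟩)))
            · exact Or.inr (Or.inl ⟨h12, h13, h21, h31⟩)

end ESMIC

/-- Two longest paths of `G` that are extreme-separated by a clique `K` and touch `K`
at most twice have a common vertex belonging to `K`. -/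
theorem extreme_separated_meet_in_clique {V : Type*} [Fintype V] [DecidableEq V]
    (G : SimpleGraph V) (K : Finset V) (hK : G.IsClique (↑K))
    ⦃u₁ v₁ u₂ v₂ : V⦄ (P : G.Walk u₁ v₁) (Q : G.Walk u₂ v₂)
    (hPlong : IsLongestPath G P) (hQlong : IsLongestPath G Q)
    (hPsep : ExtremeSeparated G (↑K) P) (hQsep : ExtremeSeparated G (↑K) Q)
    (hPtouch : (P.support.toFinset ∩ K).card ≤ 2)
    (hQtouch : (Q.support.toFinset ∩ K).card ≤ 2) :
    ∃ x ∈ K, x ∈ P.support ∧ x ∈ Q.support := by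
  classical
  by_contra hcon0
  push_neg at hcon0
  obtain ⟨-, -, -, hu₁, hv₁, hPconn⟩ := hPsep
  obtain ⟨-, -, -, hu₂, hv₂, hQconn⟩ := hQsep
  have hcon : ∀ z ∈ (↑K : Set V), z ∈ P.support → z ∈ Q.support → False := by
    intro z hz h1 h2
    exact hcon0 z (by exact_mod_cast hz) h1 h2
  have hPpath := hPlong.1
  have hQpath := hQlong.1
  have hQP : Q.length = P.length := le_antisymm (hPlong.2 Q hQpath) (hQlong.2 P hPpath)
  have hbound := hPlong.2
  have hneq : ∀ {a b : V}, a ∈ (↑K : Set V) → a ∈ P.support → b ∈ Q.support → a ≠ b :=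
    fun {a b} ha haP hbQ h => (hcon a ha haP (h ▸ hbQ)).elim
  -- decompose P
  have hPK : ∃ z ∈ P.support, z ∈ (↑K : Set V) := by
    by_contra h
    push_neg at h
    exact hPconn ⟨P, h⟩
  obtain ⟨a₁, ha₁K, Pu, Pr, hPdec, hPuOnly⟩ := ESMIC.exists_first P hPK
  have hPdecPath : (Pu.append Pr).IsPath := by rw [← hPdec]; exact hPpath
  have hPupath : Pu.IsPath := hPdecPath.of_append_left
  have hPrpath : Pr.IsPath := hPdecPath.of_append_right
  have hPrK : ∃ z ∈ Pr.reverse.support, z ∈ (↑K : Set V) :=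
    ⟨a₁, by simp [Walk.support_reverse], ha₁K⟩
  obtain ⟨a₂, ha₂K, Pv, M, hPrdec, hPvOnly⟩ := ESMIC.exists_first Pr.reverse hPrK
  have hPrdecPath : (Pv.append M).IsPath := by rw [← hPrdec]; exact hPrpath.reverse
  have hPvpath : Pv.IsPath := hPrdecPath.of_append_left
  have hMpath : M.IsPath := hPrdecPath.of_append_right
  have hPr2 : Pr = M.reverse.append Pv.reverse := by
    rw [← Walk.reverse_reverse Pr, hPrdec, Walk.reverse_append]
  have hPdec2 : P = (Pu.append M.reverse).append Pv.reverse := by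
    rw [hPdec, hPr2, ← Walk.append_assoc]
  have hW2path : (Pu.append M.reverse).IsPath := by
    have : ((Pu.append M.reverse).append Pv.reverse).IsPath := by
      rw [← hPdec2]; exact hPpath
    exact this.of_append_left
  have hPusub : ∀ z ∈ Pu.support, z ∈ P.support := fun z hz => by
    rw [hPdec, Walk.mem_support_append_iff]; exact Or.inl hz
  have hPrsub : ∀ z ∈ Pr.support, z ∈ P.support := fun z hz => by
    rw [hPdec, Walk.mem_support_append_iff]; exact Or.inr hz
  have hMsub : ∀ z ∈ M.support, z ∈ P.support := fun z hz => hPrsub z (by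
    rw [hPr2, Walk.mem_support_append_iff]
    exact Or.inl (by simpa [Walk.support_reverse] using hz))
  have hPvsub : ∀ z ∈ Pv.support, z ∈ P.support := fun z hz => hPrsub z (by
    rw [hPr2, Walk.mem_support_append_iff]
    exact Or.inr (by simpa [Walk.support_reverse] using hz))
  have hW4sub : ∀ z ∈ Pr.reverse.support, z ∈ P.support := fun z hz =>
    hPrsub z (by simpa [Walk.support_reverse] using hz)
  have hW2sub : ∀ z ∈ (Pu.append M.reverse).support, z ∈ P.support := fun z hz => by
    rcases (Walk.mem_support_append_iff _ _).1 hz with h | h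
    · exact hPusub z h
    · exact hMsub z (by simpa [Walk.support_reverse] using h)
  have ha₁P : a₁ ∈ P.support := hPusub a₁ (Walk.end_mem_support Pu)
  have ha₂P : a₂ ∈ P.support := hPvsub a₂ (Walk.end_mem_support Pv)
  have claimP : ∀ z ∈ P.support, z ∈ (↑K : Set V) → z = a₁ ∨ z = a₂ := by
    by_cases h12 : a₁ = a₂
    · intro z hz hzK
      left
      rw [hPdec, Walk.mem_support_append_iff] at hz
      rcases hz with hz | hz
      · exact hPuOnly z hz hzK
      · have hz' : z ∈ Pr.reverse.support := by simpa [Walk.support_reverse] using hz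
        rw [hPrdec, Walk.mem_support_append_iff] at hz'
        rcases hz' with hz' | hz'
        · exact (hPvOnly z hz' hzK).trans h12.symm
        · have hnil : M.copy rfl h12 = Walk.nil :=
            Walk.isPath_iff_eq_nil.1 (by rwa [Walk.isPath_copy])
          have hsup : M.support = [a₂] := by
            have := congrArg Walk.support hnil
            rwa [Walk.support_copy, Walk.support_nil] at this
          rw [hsup] at hz'
          simp only [List.mem_singleton] at hz'
          exact hz'.trans h12.symm
    · have hsub : ({a₁, a₂} : Finset V) ⊆ P.support.toFinset ∩ K := by
        intro z hz
        simp only [Finset.mem_insert, Finset.mem_singleton] at hz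
        rcases hz with rfl | rfl
        · exact Finset.mem_inter.2 ⟨List.mem_toFinset.2 ha₁P, by exact_mod_cast ha₁K⟩
        · exact Finset.mem_inter.2 ⟨List.mem_toFinset.2 ha₂P, by exact_mod_cast ha₂K⟩
      have heq : ({a₁, a₂} : Finset V) = P.support.toFinset ∩ K :=
        Finset.eq_of_subset_of_card_le hsub (by rw [Finset.card_pair h12]; exact hPtouch)
      intro z hz hzK
      have hzm : z ∈ ({a₁, a₂} : Finset V) := by
        rw [heq]
        exact Finset.mem_inter.2 ⟨List.mem_toFinset.2 hz, by exact_mod_cast hzK⟩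
      simpa using hzm
  obtain ⟨wP, covM⟩ : ∃ wP, ∀ z ∈ M.support, z ∉ (↑K : Set V) →
      ConnAvoiding G (↑K) wP z := by
    by_cases hMex : ∃ w ∈ M.support, w ∉ (↑K : Set V)
    · obtain ⟨wP, hwPmem, hwPK⟩ := hMex
      exact ⟨wP, fun z hz hzK => ESMIC.same M hMpath ha₂K ha₁K
        (fun t ht htK => (claimP t (hMsub t ht) htK).symm) hwPmem hz hwPK hzK⟩
    · exact ⟨u₁, fun z hz hzK => absurd ⟨z, hz, hzK⟩ hMex⟩
  have cov1 : ∀ z ∈ Pu.support, z ∉ (↑K : Set V) → ConnAvoiding G (↑K) u₁ z :=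
    fun z hz hzK => ESMIC.reach Pu hPupath hPuOnly hz hzK
  have cov3 : ∀ z ∈ Pv.support, z ∉ (↑K : Set V) → ConnAvoiding G (↑K) v₁ z :=
    fun z hz hzK => ESMIC.reach Pv hPvpath hPvOnly hz hzK
  have cov2 : ∀ z ∈ (Pu.append M.reverse).support, z ∉ (↑K : Set V) →
      ConnAvoiding G (↑K) u₁ z ∨ ConnAvoiding G (↑K) wP z := by
    intro z hz hzK
    rcases (Walk.mem_support_append_iff _ _).1 hz with h | h
    · exact Or.inl (cov1 z h hzK)
    · exact Or.inr (covM z (by simpa [Walk.support_reverse] using h) hzK)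
  have cov4 : ∀ z ∈ Pr.reverse.support, z ∉ (↑K : Set V) →
      ConnAvoiding G (↑K) v₁ z ∨ ConnAvoiding G (↑K) wP z := by
    intro z hz hzK
    have hz' : z ∈ Pr.support := by simpa [Walk.support_reverse] using hz
    rw [hPr2, Walk.mem_support_append_iff] at hz'
    rcases hz' with h | h
    · exact Or.inr (covM z (by simpa [Walk.support_reverse] using h) hzK)
    · exact Or.inl (cov3 z (by simpa [Walk.support_reverse] using h) hzK)
  have hlenP1 : Pu.length + Pr.reverse.length = P.length := by
    have := congrArg Walk.length hPdec
    rw [Walk.length_append] at this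
    rw [Walk.length_reverse]
    omega
  have hlenP2 : (Pu.append M.reverse).length + Pv.length = P.length := by
    have := congrArg Walk.length hPdec2
    rw [Walk.length_append, Walk.length_reverse] at this
    omega
  -- decompose Q
  have hQK : ∃ z ∈ Q.support, z ∈ (↑K : Set V) := by
    by_contra h
    push_neg at h
    exact hQconn ⟨Q, h⟩
  obtain ⟨b₁, hb₁K, Qu, Qr, hQdec, hQuOnly⟩ := ESMIC.exists_first Q hQK
  have hQdecPath : (Qu.append Qr).IsPath := by rw [← hQdec]; exact hQpath
  have hQupath : Qu.IsPath := hQdecPath.of_append_left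
  have hQrpath : Qr.IsPath := hQdecPath.of_append_right
  have hQrK : ∃ z ∈ Qr.reverse.support, z ∈ (↑K : Set V) :=
    ⟨b₁, by simp [Walk.support_reverse], hb₁K⟩
  obtain ⟨b₂, hb₂K, Qv, N, hQrdec, hQvOnly⟩ := ESMIC.exists_first Qr.reverse hQrK
  have hQrdecPath : (Qv.append N).IsPath := by rw [← hQrdec]; exact hQrpath.reverse
  have hQvpath : Qv.IsPath := hQrdecPath.of_append_left
  have hNpath : N.IsPath := hQrdecPath.of_append_right
  have hQr2 : Qr = N.reverse.append Qv.reverse := by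
    rw [← Walk.reverse_reverse Qr, hQrdec, Walk.reverse_append]
  have hQdec2 : Q = (Qu.append N.reverse).append Qv.reverse := by
    rw [hQdec, hQr2, ← Walk.append_assoc]
  have hX2path : (Qu.append N.reverse).IsPath := by
    have : ((Qu.append N.reverse).append Qv.reverse).IsPath := by
      rw [← hQdec2]; exact hQpath
    exact this.of_append_left
  have hQusub : ∀ z ∈ Qu.support, z ∈ Q.support := fun z hz => by
    rw [hQdec, Walk.mem_support_append_iff]; exact Or.inl hz
  have hQrsub : ∀ z ∈ Qr.support, z ∈ Q.support := fun z hz => by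
    rw [hQdec, Walk.mem_support_append_iff]; exact Or.inr hz
  have hNsub : ∀ z ∈ N.support, z ∈ Q.support := fun z hz => hQrsub z (by
    rw [hQr2, Walk.mem_support_append_iff]
    exact Or.inl (by simpa [Walk.support_reverse] using hz))
  have hQvsub : ∀ z ∈ Qv.support, z ∈ Q.support := fun z hz => hQrsub z (by
    rw [hQr2, Walk.mem_support_append_iff]
    exact Or.inr (by simpa [Walk.support_reverse] using hz))
  have hX4sub : ∀ z ∈ Qr.reverse.support, z ∈ Q.support := fun z hz =>
    hQrsub z (by simpa [Walk.support_reverse] using hz)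
  have hX2sub : ∀ z ∈ (Qu.append N.reverse).support, z ∈ Q.support := fun z hz => by
    rcases (Walk.mem_support_append_iff _ _).1 hz with h | h
    · exact hQusub z h
    · exact hNsub z (by simpa [Walk.support_reverse] using h)
  have hb₁Q : b₁ ∈ Q.support := hQusub b₁ (Walk.end_mem_support Qu)
  have hb₂Q : b₂ ∈ Q.support := hQvsub b₂ (Walk.end_mem_support Qv)
  have claimQ : ∀ z ∈ Q.support, z ∈ (↑K : Set V) → z = b₁ ∨ z = b₂ := by
    by_cases h12 : b₁ = b₂
    · intro z hz hzK
      left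
      rw [hQdec, Walk.mem_support_append_iff] at hz
      rcases hz with hz | hz
      · exact hQuOnly z hz hzK
      · have hz' : z ∈ Qr.reverse.support := by simpa [Walk.support_reverse] using hz
        rw [hQrdec, Walk.mem_support_append_iff] at hz'
        rcases hz' with hz' | hz'
        · exact (hQvOnly z hz' hzK).trans h12.symm
        · have hnil : N.copy rfl h12 = Walk.nil :=
            Walk.isPath_iff_eq_nil.1 (by rwa [Walk.isPath_copy])
          have hsup : N.support = [b₂] := by
            have := congrArg Walk.support hnil
            rwa [Walk.support_copy, Walk.support_nil] at this
          rw [hsup] at hz'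
          simp only [List.mem_singleton] at hz'
          exact hz'.trans h12.symm
    · have hsub : ({b₁, b₂} : Finset V) ⊆ Q.support.toFinset ∩ K := by
        intro z hz
        simp only [Finset.mem_insert, Finset.mem_singleton] at hz
        rcases hz with rfl | rfl
        · exact Finset.mem_inter.2 ⟨List.mem_toFinset.2 hb₁Q, by exact_mod_cast hb₁K⟩
        · exact Finset.mem_inter.2 ⟨List.mem_toFinset.2 hb₂Q, by exact_mod_cast hb₂K⟩
      have heq : ({b₁, b₂} : Finset V) = Q.support.toFinset ∩ K :=
        Finset.eq_of_subset_of_card_le hsub (by rw [Finset.card_pair h12]; exact hQtouch)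
      intro z hz hzK
      have hzm : z ∈ ({b₁, b₂} : Finset V) := by
        rw [heq]
        exact Finset.mem_inter.2 ⟨List.mem_toFinset.2 hz, by exact_mod_cast hzK⟩
      simpa using hzm
  obtain ⟨wQ, covN⟩ : ∃ wQ, ∀ z ∈ N.support, z ∉ (↑K : Set V) →
      ConnAvoiding G (↑K) wQ z := by
    by_cases hNex : ∃ w ∈ N.support, w ∉ (↑K : Set V)
    · obtain ⟨wQ, hwQmem, hwQK⟩ := hNex
      exact ⟨wQ, fun z hz hzK => ESMIC.same N hNpath hb₂K hb₁K
        (fun t ht htK => (claimQ t (hNsub t ht) htK).symm) hwQmem hz hwQK hzK⟩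
    · exact ⟨u₂, fun z hz hzK => absurd ⟨z, hz, hzK⟩ hNex⟩
  have covQ1 : ∀ z ∈ Qu.support, z ∉ (↑K : Set V) → ConnAvoiding G (↑K) u₂ z :=
    fun z hz hzK => ESMIC.reach Qu hQupath hQuOnly hz hzK
  have covQ3 : ∀ z ∈ Qv.support, z ∉ (↑K : Set V) → ConnAvoiding G (↑K) v₂ z :=
    fun z hz hzK => ESMIC.reach Qv hQvpath hQvOnly hz hzK
  have covQ2 : ∀ z ∈ (Qu.append N.reverse).support, z ∉ (↑K : Set V) →
      ConnAvoiding G (↑K) u₂ z ∨ ConnAvoiding G (↑K) wQ z := by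
    intro z hz hzK
    rcases (Walk.mem_support_append_iff _ _).1 hz with h | h
    · exact Or.inl (covQ1 z h hzK)
    · exact Or.inr (covN z (by simpa [Walk.support_reverse] using h) hzK)
  have covQ4 : ∀ z ∈ Qr.reverse.support, z ∉ (↑K : Set V) →
      ConnAvoiding G (↑K) v₂ z ∨ ConnAvoiding G (↑K) wQ z := by
    intro z hz hzK
    have hz' : z ∈ Qr.support := by simpa [Walk.support_reverse] using hz
    rw [hQr2, Walk.mem_support_append_iff] at hz'
    rcases hz' with h | h
    · exact Or.inr (covN z (by simpa [Walk.support_reverse] using h) hzK)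
    · exact Or.inl (covQ3 z (by simpa [Walk.support_reverse] using h) hzK)
  have hlenQ1 : Qu.length + Qr.reverse.length = Q.length := by
    have := congrArg Walk.length hQdec
    rw [Walk.length_append] at this
    rw [Walk.length_reverse]
    omega
  have hlenQ2 : (Qu.append N.reverse).length + Qv.length = Q.length := by
    have := congrArg Walk.length hQdec2
    rw [Walk.length_append, Walk.length_reverse] at this
    omega
  rcases ESMIC.selection (ConnAvoiding G (↑K : Set V)) (fun h => ESMIC.conn_symm h)
      (fun h1 h2 => ESMIC.conn_trans h1 h2) u₁ v₁ wP u₂ v₂ wQ hPconn hQconn with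
    ⟨n1, n2, n3, n4, n5⟩ | ⟨n1, n2, n3, n4⟩ | ⟨n1, n2, n3, n4, n5⟩ | ⟨n1, n2, n3, n4⟩ |
    ⟨n1, n2, n3, n4⟩ | ⟨n1, n2, n3, n4, n5⟩ | ⟨n1, n2, n3, n4⟩ | ⟨n1, n2, n3, n4, n5⟩
  · have d1 := ESMIC.disj2 hPusub hQusub hcon (fun z hz h => Or.inl (cov1 z hz h)) (fun z hz h => Or.inl (covQ1 z hz h)) n1 n1 n1 n1
    have I1 := ESMIC.join_bound hK hbound Pu Qu hPupath hQupath ha₁K hb₁K (hneq ha₁K ha₁P hb₁Q) d1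
    have d2 := ESMIC.disj2 hW4sub hX4sub hcon cov4 covQ4 n2 n3 n4 n5
    have I2 := ESMIC.join_bound hK hbound Pr.reverse Qr.reverse hPrpath.reverse hQrpath.reverse ha₁K hb₁K (hneq ha₁K ha₁P hb₁Q) d2
    have hs1 := hlenP1
    have hs2 := hlenQ1
    omega
  · have d1 := ESMIC.disj2 hPusub hX4sub hcon (fun z hz h => Or.inl (cov1 z hz h)) covQ4 n1 n2 n1 n2
    have I1 := ESMIC.join_bound hK hbound Pu Qr.reverse hPupath hQrpath.reverse ha₁K hb₁K (hneq ha₁K ha₁P hb₁Q) d1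
    have d2 := ESMIC.disj2 hW4sub hQusub hcon cov4 (fun z hz h => Or.inl (covQ1 z hz h)) n3 n3 n4 n4
    have I2 := ESMIC.join_bound hK hbound Pr.reverse Qu hPrpath.reverse hQupath ha₁K hb₁K (hneq ha₁K ha₁P hb₁Q) d2
    have hs1 := hlenP1
    have hs2 := hlenQ1
    omega
  · have d1 := ESMIC.disj2 hW2sub hX2sub hcon cov2 covQ2 n1 n2 n3 n4
    have I1 := ESMIC.join_bound hK hbound (Pu.append M.reverse) (Qu.append N.reverse) hW2path hX2path ha₂K hb₂K (hneq ha₂K ha₂P hb₂Q) d1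
    have d2 := ESMIC.disj2 hPvsub hQvsub hcon (fun z hz h => Or.inl (cov3 z hz h)) (fun z hz h => Or.inl (covQ3 z hz h)) n5 n5 n5 n5
    have I2 := ESMIC.join_bound hK hbound Pv Qv hPvpath hQvpath ha₂K hb₂K (hneq ha₂K ha₂P hb₂Q) d2
    have hs1 := hlenP2
    have hs2 := hlenQ2
    omega
  · have d1 := ESMIC.disj2 hW2sub hQvsub hcon cov2 (fun z hz h => Or.inl (covQ3 z hz h)) n1 n1 n2 n2
    have I1 := ESMIC.join_bound hK hbound (Pu.append M.reverse) Qv hW2path hQvpath ha₂K hb₂K (hneq ha₂K ha₂P hb₂Q) d1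
    have d2 := ESMIC.disj2 hPvsub hX2sub hcon (fun z hz h => Or.inl (cov3 z hz h)) covQ2 n3 n4 n3 n4
    have I2 := ESMIC.join_bound hK hbound Pv (Qu.append N.reverse) hPvpath hX2path ha₂K hb₂K (hneq ha₂K ha₂P hb₂Q) d2
    have hs1 := hlenP2
    have hs2 := hlenQ2
    omega
  · have d1 := ESMIC.disj2 hPusub hX2sub hcon (fun z hz h => Or.inl (cov1 z hz h)) covQ2 n1 n2 n1 n2
    have I1 := ESMIC.join_bound hK hbound Pu (Qu.append N.reverse) hPupath hX2path ha₁K hb₂K (hneq ha₁K ha₁P hb₂Q) d1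
    have d2 := ESMIC.disj2 hW4sub hQvsub hcon cov4 (fun z hz h => Or.inl (covQ3 z hz h)) n3 n3 n4 n4
    have I2 := ESMIC.join_bound hK hbound Pr.reverse Qv hPrpath.reverse hQvpath ha₁K hb₂K (hneq ha₁K ha₁P hb₂Q) d2
    have hs1 := hlenP1
    have hs2 := hlenQ2
    omega
  · have d1 := ESMIC.disj2 hPusub hQvsub hcon (fun z hz h => Or.inl (cov1 z hz h)) (fun z hz h => Or.inl (covQ3 z hz h)) n1 n1 n1 n1
    have I1 := ESMIC.join_bound hK hbound Pu Qv hPupath hQvpath ha₁K hb₂K (hneq ha₁K ha₁P hb₂Q) d1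
    have d2 := ESMIC.disj2 hW4sub hX2sub hcon cov4 covQ2 n2 n3 n4 n5
    have I2 := ESMIC.join_bound hK hbound Pr.reverse (Qu.append N.reverse) hPrpath.reverse hX2path ha₁K hb₂K (hneq ha₁K ha₁P hb₂Q) d2
    have hs1 := hlenP1
    have hs2 := hlenQ2
    omega
  · have d1 := ESMIC.disj2 hW2sub hQusub hcon cov2 (fun z hz h => Or.inl (covQ1 z hz h)) n1 n1 n2 n2
    have I1 := ESMIC.join_bound hK hbound (Pu.append M.reverse) Qu hW2path hQupath ha₂K hb₁K (hneq ha₂K ha₂P hb₁Q) d1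
    have d2 := ESMIC.disj2 hPvsub hX4sub hcon (fun z hz h => Or.inl (cov3 z hz h)) covQ4 n3 n4 n3 n4
    have I2 := ESMIC.join_bound hK hbound Pv Qr.reverse hPvpath hQrpath.reverse ha₂K hb₁K (hneq ha₂K ha₂P hb₁Q) d2
    have hs1 := hlenP2
    have hs2 := hlenQ1
    omega
  · have d1 := ESMIC.disj2 hW2sub hX4sub hcon cov2 covQ4 n1 n2 n3 n4
    have I1 := ESMIC.join_bound hK hbound (Pu.append M.reverse) Qr.reverse hW2path hQrpath.reverse ha₂K hb₁K (hneq ha₂K ha₂P hb₁Q) d1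
    have d2 := ESMIC.disj2 hPvsub hQusub hcon (fun z hz h => Or.inl (cov3 z hz h)) (fun z hz h => Or.inl (covQ1 z hz h)) n5 n5 n5 n5
    have I2 := ESMIC.join_bound hK hbound Pv Qu hPvpath hQupath ha₂K hb₁K (hneq ha₂K ha₂P hb₁Q) d2
    have hs1 := hlenP2
    have hs2 := hlenQ1
    omega
end

section
/- Let G be a finite connected graph with at least two vertices and suppose G admits a tree decomposition of width k (so the treewidth of G is at most k, and k ≥ 1). Then lpt(G) ≤ k; that is, there is a set of at most k vertices of G meeting every longest path of G. -/
open SimpleGraph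

/-- A tree decomposition of `G` over a tree `T`: every vertex lies in some bag, every
edge is contained in some bag, and for every vertex the set of tree nodes whose bag
contains it induces a connected subgraph of `T`. -/
structure TreeDecomp {V ι : Type*} (G : SimpleGraph V) (T : SimpleGraph ι) where
  isTree : T.IsTree
  bag : ι → Finset V
  bag_cover : ∀ v : V, ∃ t, v ∈ bag t
  bag_edge : ∀ ⦃u v : V⦄, G.Adj u v → ∃ t, u ∈ bag t ∧ v ∈ bag t
  bag_conn : ∀ v : V, (T.induce {t | v ∈ bag t}).Preconnected

open Walk

namespace LptAux

variable {V : Type*} {G : SimpleGraph V}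

/-- Split a walk at the first vertex satisfying a property. -/
lemma exists_first_split (S : Set V) :
    ∀ {a b : V} (W : G.Walk a b), (∃ v ∈ W.support, v ∈ S) →
      ∃ (z : V) (W₁ : G.Walk a z) (W₂ : G.Walk z b),
        W = W₁.append W₂ ∧ z ∈ S ∧ ∀ v ∈ W₁.support, v ∈ S → v = z := by
  intro a b W
  induction W with
  | nil =>
    intro h
    obtain ⟨v, hv, hvS⟩ := h
    simp only [support_nil, List.mem_singleton] at hv
    subst hv
    exact ⟨_, .nil, .nil, rfl, hvS, by simp⟩
  | @cons u c b h p ih =>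
    intro hex
    by_cases hu : u ∈ S
    · exact ⟨u, .nil, .cons h p, rfl, hu, by simp⟩
    · have hex' : ∃ v ∈ p.support, v ∈ S := by
        obtain ⟨v, hv, hvS⟩ := hex
        rw [support_cons] at hv
        rcases List.mem_cons.mp hv with h1 | h1
        · exact absurd (h1 ▸ hvS) hu
        · exact ⟨v, h1, hvS⟩
      obtain ⟨z, W₁, W₂, heq, hz, hmin⟩ := ih hex'
      refine ⟨z, .cons h W₁, W₂, by rw [cons_append, heq], hz, ?_⟩
      intro v hv hvS
      rw [support_cons] at hv
      rcases List.mem_cons.mp hv with h1 | h1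
      · exact absurd (h1 ▸ hvS) hu
      · exact hmin v h1 hvS

lemma isPath_append_of_inter {a b c : V} {p : G.Walk a b} {q : G.Walk b c}
    (hp : p.IsPath) (hq : q.IsPath)
    (h : ∀ v, v ∈ p.support → v ∈ q.support → v = b) : (p.append q).IsPath := by
  rw [isPath_def, support_append]
  refine List.Nodup.append hp.support_nodup
    (List.Nodup.of_cons (by rw [← support_eq_cons]; exact hq.support_nodup)) ?_
  intro v hv hv'
  have hvq : v ∈ q.support := q.support_eq_cons ▸ List.mem_cons_of_mem _ hv'
  have hvb := h v hv hvq
  subst hvb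
  have : v ∉ q.support.tail := by
    have h2 := hq.support_nodup
    rw [q.support_eq_cons] at h2
    exact (List.nodup_cons.mp h2).1
  exact this hv'

lemma split_inter {a b x : V} {p : G.Walk a x} {q : G.Walk x b}
    (h : (p.append q).IsPath) : ∀ v, v ∈ p.support → v ∈ q.support → v = x := by
  intro v hvp hvq
  by_contra hne
  have hnodup := (isPath_def _).mp h
  rw [support_append] at hnodup
  have hvq' : v ∈ q.support.tail := by
    have := q.support_eq_cons ▸ hvq
    rcases List.mem_cons.mp this with h1 | h1
    · exact absurd h1 hne
    · exact h1
  exact (List.disjoint_of_nodup_append hnodup) hvp hvq'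

lemma exists_longest [Fintype V] [Nonempty V] (G : SimpleGraph V) :
    ∃ (u v : V) (p : G.Walk u v), IsLongestPath G p := by
  classical
  set Pred : ℕ → Prop := fun n => ∃ (u v : V) (p : G.Walk u v), p.IsPath ∧ p.length = n with hPred
  have h0 : Pred 0 := ⟨Classical.arbitrary V, Classical.arbitrary V, .nil, by simp, rfl⟩
  have hspec := Nat.findGreatest_spec (P := Pred) (Nat.zero_le (Fintype.card V)) h0
  obtain ⟨u, v, p, hp, hlen⟩ := hspec
  refine ⟨u, v, p, hp, ?_⟩
  intro a b q hq
  have hb : q.length ≤ Fintype.card V := le_of_lt hq.length_lt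
  have hle := Nat.le_findGreatest (P := Pred) hb ⟨a, b, q, hq, rfl⟩
  omega

lemma IsLongestPath.reverse {u v : V} {p : G.Walk u v} (h : IsLongestPath G p) :
    IsLongestPath G p.reverse := by
  refine ⟨h.1.reverse, ?_⟩
  intro a b q hq
  rw [length_reverse]
  exact h.2 q hq

lemma longest_length_eq {u v a b : V} {p : G.Walk u v} {q : G.Walk a b}
    (hp : IsLongestPath G p) (hq : IsLongestPath G q) : p.length = q.length :=
  le_antisymm (hq.2 p hp.1) (hp.2 q hq.1)

/-- Connectivity avoiding a vertex set `B`. -/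
def AConn (G : SimpleGraph V) (B : Finset V) (u v : V) : Prop :=
  ∃ w : G.Walk u v, ∀ s ∈ w.support, s ∉ B

namespace AConn

variable {B : Finset V}

lemma notMem {u v : V} (h : AConn G B u v) : u ∉ B := by
  obtain ⟨w, hw⟩ := h; exact hw u w.start_mem_support

lemma refl {u : V} (h : u ∉ B) : AConn G B u u :=
  ⟨.nil, by simpa using h⟩

lemma symm {u v : V} (h : AConn G B u v) : AConn G B v u := by
  obtain ⟨w, hw⟩ := h
  exact ⟨w.reverse, fun s hs => hw s (by rwa [support_reverse, List.mem_reverse] at hs)⟩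

lemma trans {u v x : V} (h : AConn G B u v) (h' : AConn G B v x) :
    AConn G B u x := by
  obtain ⟨w, hw⟩ := h
  obtain ⟨w', hw'⟩ := h'
  refine ⟨w.append w', fun s hs => ?_⟩
  rcases (mem_support_append_iff _ _).mp hs with h1 | h1
  exacts [hw s h1, hw' s h1]

end AConn

variable {B : Finset V} [DecidableEq V]

/-- Two non-`x` vertices on a path ending at `x` that avoids `B` except possibly at `x`
are connected avoiding `B`. -/
lemma conn_within_side {a x : V} (W : G.Walk a x) (hW : W.IsPath)
    (hB : ∀ v ∈ W.support, v ∈ B → v = x) {u v : V}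
    (hu : u ∈ W.support) (hv : v ∈ W.support) (hux : u ≠ x) (hvx : v ≠ x) :
    AConn G B u v := by
  have hspec : (W.takeUntil u hu).append (W.dropUntil u hu) = W := W.take_spec hu
  have happ : ((W.takeUntil u hu).append (W.dropUntil u hu)).IsPath := by rwa [hspec]
  have hxW₁ : x ∉ (W.takeUntil u hu).support := by
    intro hx
    exact hux (split_inter happ x hx (W.dropUntil u hu).end_mem_support).symm
  by_cases hv1 : v ∈ (W.takeUntil u hu).support
  · refine AConn.symm ⟨(W.takeUntil u hu).dropUntil v hv1, ?_⟩
    intro s hs hsB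
    have hsW₁ : s ∈ (W.takeUntil u hu).support := support_dropUntil_subset _ hv1 hs
    have hsx := hB s (support_takeUntil_subset _ hu hsW₁) hsB
    exact hxW₁ (hsx ▸ hsW₁)
  · have hv2 : v ∈ (W.dropUntil u hu).support := by
      have hv' : v ∈ ((W.takeUntil u hu).append (W.dropUntil u hu)).support := by
        rw [hspec]; exact hv
      rcases (mem_support_append_iff _ _).mp hv' with h1 | h1
      · exact absurd h1 hv1
      · exact h1
    refine ⟨(W.dropUntil u hu).takeUntil v hv2, ?_⟩
    intro s hs hsB
    have hsW : s ∈ W.support :=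
      support_dropUntil_subset W hu (support_takeUntil_subset _ hv2 hs)
    have hsx := hB s hsW hsB
    subst hsx
    have happ2 : (((W.dropUntil u hu).takeUntil v hv2).append
        ((W.dropUntil u hu).dropUntil v hv2)).IsPath := by
      rw [(W.dropUntil u hu).take_spec hv2]; exact happ.of_append_right
    exact hvx (split_inter happ2 s hs ((W.dropUntil u hu).dropUntil v hv2).end_mem_support).symm

/-- From a vertex `u ≠ x` on a path starting at `x` avoiding `B` except at `x`,
there is a neighbour `c` of `x` with `c ∉ B` and `c` connected to `u` avoiding `B`. -/
lemma exists_entry {x b u : V} (W : G.Walk x b) (hW : W.IsPath)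
    (hB : ∀ v ∈ W.support, v ∈ B → v = x) (hu : u ∈ W.support) (hux : u ≠ x) :
    ∃ c, G.Adj x c ∧ c ∉ B ∧ AConn G B c u := by
  have hMpath : (W.takeUntil u hu).IsPath := hW.takeUntil _
  have hMsub : (W.takeUntil u hu).support ⊆ W.support := support_takeUntil_subset _ hu
  have hnil : ¬ (W.takeUntil u hu).Nil := by
    intro hN
    exact hux.symm (Walk.eq_of_length_eq_zero (Walk.nil_iff_length_eq.mp hN))
  obtain ⟨c, hadj, M', hM'⟩ := Walk.not_nil_iff.mp hnil
  have hMp : (Walk.cons hadj M').IsPath := hM' ▸ hMpath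
  have hxM' : x ∉ M'.support := by
    have := hMp
    rw [Walk.cons_isPath_iff] at this
    exact this.2
  have hsub' : M'.support ⊆ W.support := by
    intro s hs
    exact hMsub (hM' ▸ (by rw [support_cons]; exact List.mem_cons_of_mem _ hs))
  have hM'B : ∀ s ∈ M'.support, s ∉ B := by
    intro s hs hsB
    exact hxM' ((hB s (hsub' hs) hsB) ▸ hs)
  exact ⟨c, hadj, hM'B c M'.start_mem_support, ⟨M', hM'B⟩⟩

end LptAux

namespace LptAux

variable {V : Type*} {G : SimpleGraph V} {B : Finset V} [DecidableEq V]

section Sides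

variable {a b x : V} {P : G.Walk a b}

lemma mem_take_or_drop (hxP : x ∈ P.support) {u : V} (hu : u ∈ P.support) :
    u ∈ (P.takeUntil x hxP).support ∨ u ∈ (P.dropUntil x hxP).support := by
  rw [← P.take_spec hxP] at hu
  exact (mem_support_append_iff _ _).mp hu

lemma eq_of_mem_take_drop (hP : P.IsPath) (hxP : x ∈ P.support) {u : V}
    (h1 : u ∈ (P.takeUntil x hxP).support)
    (h2 : u ∈ (P.dropUntil x hxP).support) : u = x :=
  split_inter (by rw [P.take_spec hxP]; exact hP) u h1 h2

lemma take_add_drop_length (hxP : x ∈ P.support) :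
    (P.takeUntil x hxP).length + (P.dropUntil x hxP).length = P.length := by
  have := congrArg Walk.length (P.take_spec hxP)
  rwa [length_append] at this

lemma take_conn (hP : P.IsPath) (hxP : x ∈ P.support)
    (hPB : ∀ v ∈ P.support, v ∈ B → v = x) {u v : V}
    (hu : u ∈ (P.takeUntil x hxP).support) (hv : v ∈ (P.takeUntil x hxP).support)
    (hux : u ≠ x) (hvx : v ≠ x) : AConn G B u v :=
  conn_within_side (P.takeUntil x hxP) (hP.takeUntil _)
    (fun w hw hwB => hPB w (support_takeUntil_subset _ _ hw) hwB) hu hv hux hvx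

lemma drop_conn (hP : P.IsPath) (hxP : x ∈ P.support)
    (hPB : ∀ v ∈ P.support, v ∈ B → v = x) {u v : V}
    (hu : u ∈ (P.dropUntil x hxP).support) (hv : v ∈ (P.dropUntil x hxP).support)
    (hux : u ≠ x) (hvx : v ≠ x) : AConn G B u v := by
  have hrev : ((P.dropUntil x hxP).reverse : G.Walk b x).IsPath := (hP.dropUntil _).reverse
  refine conn_within_side (P.dropUntil x hxP).reverse hrev ?_ ?_ ?_ hux hvx
  · intro w hw hwB
    rw [support_reverse, List.mem_reverse] at hw
    exact hPB w (support_dropUntil_subset _ _ hw) hwB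
  · rwa [support_reverse, List.mem_reverse]
  · rwa [support_reverse, List.mem_reverse]

lemma side_opposite (hP : P.IsPath) (hxP : x ∈ P.support) (hxB : x ∈ B)
    (hPB : ∀ v ∈ P.support, v ∈ B → v = x) {c d : V}
    (hc : c ∈ P.support) (hcB : c ∉ B) (hd : d ∈ P.support) (hdB : d ∉ B)
    (hcd : ¬ AConn G B c d) :
    (c ∈ (P.takeUntil x hxP).support ∧ d ∉ (P.takeUntil x hxP).support ∧
      d ∈ (P.dropUntil x hxP).support) ∨
    (c ∉ (P.takeUntil x hxP).support ∧ c ∈ (P.dropUntil x hxP).support ∧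
      d ∈ (P.takeUntil x hxP).support) := by
  have hcx : c ≠ x := fun h => hcB (h ▸ hxB)
  have hdx : d ≠ x := fun h => hdB (h ▸ hxB)
  rcases mem_take_or_drop hxP hc with h1 | h1
  · left
    have hd2 : d ∉ (P.takeUntil x hxP).support := fun h2 =>
      hcd (take_conn hP hxP hPB h1 h2 hcx hdx)
    refine ⟨h1, hd2, ?_⟩
    rcases mem_take_or_drop hxP hd with h3 | h3
    · exact absurd h3 hd2
    · exact h3
  · have hc2 : c ∉ (P.takeUntil x hxP).support := fun h2 =>
      (hcx (eq_of_mem_take_drop hP hxP h2 h1))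
    right
    refine ⟨hc2, h1, ?_⟩
    rcases mem_take_or_drop hxP hd with h3 | h3
    · exact h3
    · exact absurd (drop_conn hP hxP hPB h1 h3 hcx hdx) hcd

lemma side_iff_of_two (hP : P.IsPath) (hxP : x ∈ P.support) (hxB : x ∈ B)
    (hPB : ∀ v ∈ P.support, v ∈ B → v = x) {c d : V}
    (hc : c ∈ P.support) (hcB : c ∉ B) (hd : d ∈ P.support) (hdB : d ∉ B)
    (hcd : ¬ AConn G B c d) :
    ∀ u ∈ P.support, u ∉ B → AConn G B u c →
      (u ∈ (P.takeUntil x hxP).support ↔ c ∈ (P.takeUntil x hxP).support) := by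
  intro u hu huB huc
  have hux : u ≠ x := fun h => huB (h ▸ hxB)
  have hcx : c ≠ x := fun h => hcB (h ▸ hxB)
  have hdx : d ≠ x := fun h => hdB (h ▸ hxB)
  rcases side_opposite hP hxP hxB hPB hc hcB hd hdB hcd with ⟨hct, hdt, hdd⟩ | ⟨hct, hcd', hdt⟩
  · simp only [hct, iff_true]
    by_contra hut
    rcases mem_take_or_drop hxP hu with h1 | h1
    · exact hut h1
    · exact hcd (AConn.trans (AConn.symm huc) (drop_conn hP hxP hPB h1 hdd hux hdx))
  · simp only [hct, iff_false]
    intro hut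
    exact hcd (AConn.trans (AConn.symm huc) (take_conn hP hxP hPB hut hdt hux hdx))

lemma conn_rep (hP : P.IsPath) (hxP : x ∈ P.support) (hxB : x ∈ B)
    (hPB : ∀ v ∈ P.support, v ∈ B → v = x) {c d : V}
    (hc : c ∈ P.support) (hcB : c ∉ B) (hd : d ∈ P.support) (hdB : d ∉ B)
    (hcd : ¬ AConn G B c d) :
    ∀ u ∈ P.support, u ∉ B → AConn G B u c ∨ AConn G B u d := by
  intro u hu huB
  have hux : u ≠ x := fun h => huB (h ▸ hxB)
  have hcx : c ≠ x := fun h => hcB (h ▸ hxB)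
  have hdx : d ≠ x := fun h => hdB (h ▸ hxB)
  rcases side_opposite hP hxP hxB hPB hc hcB hd hdB hcd with ⟨hct, _, hdd⟩ | ⟨_, hcd', hdt⟩
  · rcases mem_take_or_drop hxP hu with h1 | h1
    · exact Or.inl (take_conn hP hxP hPB h1 hct hux hcx)
    · exact Or.inr (drop_conn hP hxP hPB h1 hdd hux hdx)
  · rcases mem_take_or_drop hxP hu with h1 | h1
    · exact Or.inr (take_conn hP hxP hPB h1 hdt hux hdx)
    · exact Or.inl (drop_conn hP hxP hPB h1 hcd' hux hcx)

end Sides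

end LptAux

namespace LptAux

variable {V : Type*} {G : SimpleGraph V} [DecidableEq V]

/-- Any two longest paths in a connected graph share a vertex. -/
lemma longest_paths_intersect [Fintype V] (hconn : G.Connected)
    {a b c d : V} {P : G.Walk a b} {Q : G.Walk c d}
    (hP : IsLongestPath G P) (hQ : IsLongestPath G Q) :
    ∃ v, v ∈ P.support ∧ v ∈ Q.support := by
  by_contra hdisj
  push_neg at hdisj
  set L := P.length with hL
  have hQL : Q.length = L := longest_length_eq hQ hP
  obtain ⟨W₀⟩ := hconn.preconnected a c
  obtain ⟨z, A, Bw, heq, hzS, hmin⟩ :=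
    exists_first_split {v | v ∈ Q.support} W₀ ⟨c, W₀.end_mem_support, Q.start_mem_support⟩
  have hA'sub : (A.toPath : G.Walk a z).support ⊆ A.support := support_toPath_subset A
  have hminA' : ∀ v ∈ (A.toPath : G.Walk a z).support, v ∈ Q.support → v = z :=
    fun v hv hq => hmin v (hA'sub hv) hq
  obtain ⟨y, R, R₂, heq2, hyP, hmin2⟩ :=
    exists_first_split {v | v ∈ P.support} (A.toPath : G.Walk a z).reverse
      ⟨a, by rw [support_reverse, List.mem_reverse]; exact start_mem_support _,
       P.start_mem_support⟩
  have hRrev : ((A.toPath : G.Walk a z).reverse).IsPath := (A.toPath.2).reverse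
  have hRpath : R.IsPath := IsPath.of_append_left (heq2 ▸ hRrev)
  have hRsub : R.support ⊆ (A.toPath : G.Walk a z).support := by
    intro s hs
    have : s ∈ (R.append R₂).support := (mem_support_append_iff _ _).mpr (Or.inl hs)
    rw [← heq2, support_reverse, List.mem_reverse] at this
    exact this
  have hRQ : ∀ v ∈ R.support, v ∈ Q.support → v = z := fun v hv hq => hminA' v (hRsub hv) hq
  have hRP : ∀ v ∈ R.support, v ∈ P.support → v = y := fun v hv hp => hmin2 v hv hp
  have hyz : y ≠ z := fun h => hdisj y hyP (h ▸ hzS)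
  have hR1 : 1 ≤ R.length := by
    rcases Nat.eq_zero_or_pos R.length with h0 | h1
    · exact absurd (Walk.eq_of_length_eq_zero h0).symm hyz
    · exact h1
  have key : ∀ {e1 : V} (H : G.Walk e1 y), H.IsPath →
      (∀ v ∈ H.support, v ∈ P.support) → 2 * H.length ≥ L →
      ∀ {e2 : V} (K : G.Walk e2 z), K.IsPath →
      (∀ v ∈ K.support, v ∈ Q.support) → 2 * K.length ≥ L → False := by
    intro e1 H hHp hHsub hHlen e2 K hKp hKsub hKlen
    have hinner : (R.reverse.append K.reverse).IsPath := by
      refine isPath_append_of_inter hRpath.reverse hKp.reverse ?_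
      intro v hv hv'
      rw [support_reverse, List.mem_reverse] at hv hv'
      exact hRQ v hv (hKsub v hv')
    have houter : (H.append (R.reverse.append K.reverse)).IsPath := by
      refine isPath_append_of_inter hHp hinner ?_
      intro v hv hv'
      rcases (mem_support_append_iff _ _).mp hv' with h1 | h1
      · rw [support_reverse, List.mem_reverse] at h1
        exact (hRP v h1 (hHsub v hv)).symm ▸ rfl
      · rw [support_reverse, List.mem_reverse] at h1
        exact absurd (hKsub v h1) (hdisj v (hHsub v hv))
    have hlen := hP.2 _ houter
    rw [length_append, length_append, length_reverse, length_reverse] at hlen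
    omega
  have Hpack : ∃ (e1 : V) (H : G.Walk e1 y), H.IsPath ∧
      (∀ v ∈ H.support, v ∈ P.support) ∧ 2 * H.length ≥ L := by
    have hsum := take_add_drop_length (P := P) hyP
    rcases le_total (P.takeUntil y hyP).length (P.dropUntil y hyP).length with h | h
    · refine ⟨b, (P.dropUntil y hyP).reverse, (hP.1.dropUntil _).reverse, ?_, ?_⟩
      · intro v hv
        rw [support_reverse, List.mem_reverse] at hv
        exact support_dropUntil_subset _ _ hv
      · rw [length_reverse]; omega
    · exact ⟨a, P.takeUntil y hyP, hP.1.takeUntil _,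
        fun v hv => support_takeUntil_subset _ _ hv, by omega⟩
  have Kpack : ∃ (e2 : V) (K : G.Walk e2 z), K.IsPath ∧
      (∀ v ∈ K.support, v ∈ Q.support) ∧ 2 * K.length ≥ L := by
    have hzQ : z ∈ Q.support := hzS
    have hsum := take_add_drop_length (P := Q) hzQ
    rcases le_total (Q.takeUntil z hzQ).length (Q.dropUntil z hzQ).length with h | h
    · refine ⟨d, (Q.dropUntil z hzQ).reverse, (hQ.1.dropUntil _).reverse, ?_, ?_⟩
      · intro v hv
        rw [support_reverse, List.mem_reverse] at hv
        exact support_dropUntil_subset _ _ hv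
      · rw [length_reverse]; omega
    · exact ⟨c, Q.takeUntil z hzQ, hQ.1.takeUntil _,
        fun v hv => support_takeUntil_subset _ _ hv, by omega⟩
  obtain ⟨e1, H, h1, h2, h3⟩ := Hpack
  obtain ⟨e2, K, k1, k2, k3⟩ := Kpack
  exact key H h1 h2 h3 K k1 k2 k3

end LptAux

namespace LptAux

variable {V : Type*} {G : SimpleGraph V} [DecidableEq V]

/-- Core exchange lemma: if two longest paths `P = P1 ++ P2` (split at `x`) and
`Q = Q1 ++ Q2` (split at `y`) satisfy: `P2` avoids `Q` except at `x`; every common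
vertex of `P1` and `Q` lies on `Q1` away from `y`; and they do share a vertex on
`P1`; then the `P1` side is long: `2 * |P1| ≥ L + 2`. -/
lemma coreB {L : ℕ} {p₂ q₁ q₂ x y : V} {p₁ : V}
    (P1 : G.Walk p₁ x) (P2 : G.Walk x p₂) (Q1 : G.Walk q₁ y) (Q2 : G.Walk y q₂)
    (hP : IsLongestPath G (P1.append P2)) (hQ : IsLongestPath G (Q1.append Q2))
    (hPL : (P1.append P2).length = L) (hQL : (Q1.append Q2).length = L)
    (hxQ : x ∉ (Q1.append Q2).support)
    {c : V} (hc1 : c ∈ P1.support) (hc2 : c ∈ (Q1.append Q2).support)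
    (h1 : ∀ u ∈ P2.support, u ≠ x → u ∉ (Q1.append Q2).support)
    (h3 : ∀ u ∈ P1.support, u ∈ (Q1.append Q2).support → u ∈ Q1.support ∧ u ≠ y) :
    2 * P1.length ≥ L + 2 := by
  have hP1path : P1.IsPath := hP.1.of_append_left
  have hP2path : P2.IsPath := hP.1.of_append_right
  have hQ1path : Q1.IsPath := hQ.1.of_append_left
  have hWpath : P1.reverse.IsPath := hP1path.reverse
  obtain ⟨z, W₁, W₂, heqW, hzQ, hmin⟩ :=
    exists_first_split {v | v ∈ (Q1.append Q2).support} P1.reverse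
      ⟨c, by rw [support_reverse, List.mem_reverse]; exact hc1, hc2⟩
  have hW₁path : W₁.IsPath := IsPath.of_append_left (heqW ▸ hWpath)
  have hW₁sub : W₁.support ⊆ P1.support := by
    intro v hv
    have : v ∈ (W₁.append W₂).support := (mem_support_append_iff _ _).mpr (Or.inl hv)
    rw [← heqW, support_reverse, List.mem_reverse] at this
    exact this
  have hzP1 : z ∈ P1.support := hW₁sub W₁.end_mem_support
  obtain ⟨hzQ1, hzy⟩ := h3 z hzP1 hzQ
  have hzx : z ≠ x := fun h => hxQ (h ▸ hzQ)
  have hm1 : 1 ≤ W₁.length := by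
    rcases Nat.eq_zero_or_pos W₁.length with h0 | h' 
    · exact absurd (Walk.eq_of_length_eq_zero h0).symm hzx
    · exact h'
  have hPlen : P1.length + P2.length = L := by rw [← length_append]; exact hPL
  have hQlen : Q1.length + Q2.length = L := by rw [← length_append]; exact hQL
  have hQ1len : (Q1.takeUntil z hzQ1).length + (Q1.dropUntil z hzQ1).length = Q1.length :=
    take_add_drop_length hzQ1
  have hQ1asub : (Q1.takeUntil z hzQ1).support ⊆ (Q1.append Q2).support := by
    intro v hv
    exact (mem_support_append_iff _ _).mpr (Or.inl (support_takeUntil_subset _ _ hv))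
  -- first new path : p₂ → x → z → q₁
  have inner1 : (W₁.append (Q1.takeUntil z hzQ1).reverse).IsPath := by
    refine isPath_append_of_inter hW₁path (hQ1path.takeUntil _).reverse ?_
    intro v hv hv'
    rw [support_reverse, List.mem_reverse] at hv'
    exact hmin v hv (hQ1asub hv')
  have outer1 : (P2.reverse.append (W₁.append (Q1.takeUntil z hzQ1).reverse)).IsPath := by
    refine isPath_append_of_inter hP2path.reverse inner1 ?_
    intro v hv hv'
    rw [support_reverse, List.mem_reverse] at hv
    by_contra hvx
    rcases (mem_support_append_iff _ _).mp hv' with h2 | h2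
    · exact hvx (split_inter hP.1 v (hW₁sub h2) hv)
    · rw [support_reverse, List.mem_reverse] at h2
      exact h1 v hv hvx (hQ1asub h2)
  have hlen1 := hP.2 _ outer1
  rw [hPL, length_append, length_append, length_reverse, length_reverse] at hlen1
  -- second new path : p₂ → x → z → y → q₂
  have hQassoc : (Q1.takeUntil z hzQ1).append ((Q1.dropUntil z hzQ1).append Q2)
      = Q1.append Q2 := by
    rw [Walk.append_assoc, Q1.take_spec hzQ1]
  have hZBpath : ((Q1.dropUntil z hzQ1).append Q2).IsPath :=
    IsPath.of_append_right (p := Q1.takeUntil z hzQ1) (by rw [hQassoc]; exact hQ.1)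
  have hZBsub : ((Q1.dropUntil z hzQ1).append Q2).support ⊆ (Q1.append Q2).support := by
    intro v hv
    rw [← hQassoc]
    exact (mem_support_append_iff _ _).mpr (Or.inr hv)
  have inner2 : (W₁.append ((Q1.dropUntil z hzQ1).append Q2)).IsPath := by
    refine isPath_append_of_inter hW₁path hZBpath ?_
    intro v hv hv'
    exact hmin v hv (hZBsub hv')
  have outer2 : (P2.reverse.append (W₁.append ((Q1.dropUntil z hzQ1).append Q2))).IsPath := by
    refine isPath_append_of_inter hP2path.reverse inner2 ?_
    intro v hv hv'
    rw [support_reverse, List.mem_reverse] at hv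
    by_contra hvx
    rcases (mem_support_append_iff _ _).mp hv' with h2 | h2
    · exact hvx (split_inter hP.1 v (hW₁sub h2) hv)
    · exact h1 v hv hvx (hZBsub h2)
  have hlen2 := hP.2 _ outer2
  rw [hPL, length_append, length_append, length_append, length_reverse] at hlen2
  have hWlen : W₁.length + W₂.length = P1.length := by
    have := congrArg Walk.length heqW
    rw [length_reverse, length_append] at this
    omega
  omega

end LptAux

namespace LptAux

variable {V : Type*} {G : SimpleGraph V} [DecidableEq V]

/-- Orientation-free wrapper around `coreB`. -/
lemma Babs {B : Finset V} {L : ℕ} {a b a' b' x y c : V}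
    {P : G.Walk a b} {Q : G.Walk a' b'}
    (hP : IsLongestPath G P) (hQ : IsLongestPath G Q)
    (hPL : P.length = L) (hQL : Q.length = L)
    (hxB : x ∈ B) (hyB : y ∈ B) (hxy : x ≠ y)
    (hxP : x ∈ P.support) (hyQ : y ∈ Q.support)
    (hPB : ∀ u ∈ P.support, u ∈ B → u = x)
    (hQB : ∀ u ∈ Q.support, u ∈ B → u = y)
    (hcP : c ∈ P.support) (hcQ : c ∈ Q.support) (hcB : c ∉ B)
    (hshared : ∀ u, u ∈ P.support → u ∈ Q.support → AConn G B u c)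
    (hsideP : ∀ u ∈ P.support, u ∉ B → AConn G B u c →
        (u ∈ (P.takeUntil x hxP).support ↔ c ∈ (P.takeUntil x hxP).support))
    (hsideQ : ∀ u ∈ Q.support, u ∉ B → AConn G B u c →
        (u ∈ (Q.takeUntil y hyQ).support ↔ c ∈ (Q.takeUntil y hyQ).support)) :
    (c ∈ (P.takeUntil x hxP).support → 2 * (P.takeUntil x hxP).length ≥ L + 2) ∧
    (c ∉ (P.takeUntil x hxP).support → 2 * (P.dropUntil x hxP).length ≥ L + 2) := by
  have hxQ : x ∉ Q.support := fun h => hxy (hQB x h hxB)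
  have hnotB : ∀ u, u ∈ P.support → u ∈ Q.support → u ∉ B := by
    intro u hu hq huB
    exact hxQ ((hPB u hu huB) ▸ hq)
  have h1take : c ∈ (P.takeUntil x hxP).support →
      ∀ u ∈ (P.dropUntil x hxP).support, u ≠ x → u ∉ Q.support := by
    intro hcPt u hu hux huQ
    have huP : u ∈ P.support := support_dropUntil_subset _ _ hu
    have huB : u ∉ B := fun hB => hux (hPB u huP hB)
    have hconn := hshared u huP huQ
    have hmem := (hsideP u huP huB hconn).mpr hcPt
    exact hux (eq_of_mem_take_drop hP.1 hxP hmem hu)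
  have h1drop : c ∉ (P.takeUntil x hxP).support →
      ∀ u ∈ (P.takeUntil x hxP).support, u ≠ x → u ∉ Q.support := by
    intro hcPt u hu hux huQ
    have huP : u ∈ P.support := support_takeUntil_subset _ _ hu
    have huB : u ∉ B := fun hB => hux (hPB u huP hB)
    have hconn := hshared u huP huQ
    exact hcPt ((hsideP u huP huB hconn).mp hu)
  have h3take : c ∈ (Q.takeUntil y hyQ).support →
      ∀ u ∈ P.support, u ∈ Q.support → u ∈ (Q.takeUntil y hyQ).support ∧ u ≠ y := by
    intro hcQt u hu huQ
    have huB := hnotB u hu huQ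
    have huy : u ≠ y := fun h => huB (h ▸ hyB)
    exact ⟨(hsideQ u huQ huB (hshared u hu huQ)).mpr hcQt, huy⟩
  have h3drop : c ∉ (Q.takeUntil y hyQ).support →
      ∀ u ∈ P.support, u ∈ Q.support → u ∈ (Q.dropUntil y hyQ).support ∧ u ≠ y := by
    intro hcQt u hu huQ
    have huB := hnotB u hu huQ
    have huy : u ≠ y := fun h => huB (h ▸ hyB)
    refine ⟨?_, huy⟩
    rcases mem_take_or_drop hyQ huQ with h | h
    · exact absurd ((hsideQ u huQ huB (hshared u hu huQ)).mp h) hcQt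
    · exact h
  have hQpack : ∃ (q₁' q₂' : V) (Q1 : G.Walk q₁' y) (Q2 : G.Walk y q₂'),
      IsLongestPath G (Q1.append Q2) ∧ (Q1.append Q2).length = L ∧
      (∀ u, u ∈ (Q1.append Q2).support ↔ u ∈ Q.support) ∧
      c ∈ Q1.support ∧
      (∀ u ∈ P.support, u ∈ Q.support → u ∈ Q1.support ∧ u ≠ y) := by
    rcases (em (c ∈ (Q.takeUntil y hyQ).support)) with hc | hc
    · refine ⟨a', b', Q.takeUntil y hyQ, Q.dropUntil y hyQ, ?_, ?_, ?_, hc, h3take hc⟩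
      · rw [Q.take_spec hyQ]; exact hQ
      · rw [Q.take_spec hyQ]; exact hQL
      · intro u; rw [Q.take_spec hyQ]
    · have hrev : ((Q.dropUntil y hyQ).reverse).append ((Q.takeUntil y hyQ).reverse)
          = Q.reverse := by rw [← reverse_append, Q.take_spec hyQ]
      refine ⟨b', a', (Q.dropUntil y hyQ).reverse, (Q.takeUntil y hyQ).reverse,
        ?_, ?_, ?_, ?_, ?_⟩
      · rw [hrev]; exact IsLongestPath.reverse hQ
      · rw [hrev, length_reverse]; exact hQL
      · intro u; rw [hrev, support_reverse, List.mem_reverse]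
      · rw [support_reverse, List.mem_reverse]
        rcases mem_take_or_drop hyQ hcQ with h | h
        exacts [absurd h hc, h]
      · intro u hu huQ
        obtain ⟨h', hy'⟩ := h3drop hc u hu huQ
        exact ⟨by rwa [support_reverse, List.mem_reverse], hy'⟩
  obtain ⟨q₁', q₂', Q1, Q2, hQ'l, hQ'L, hQ'mem, hcQ1, h3'⟩ := hQpack
  constructor
  · intro hcPt
    have h1' : ∀ u ∈ (P.dropUntil x hxP).support, u ≠ x →
        u ∉ (Q1.append Q2).support := by
      intro u hu hux huQ'
      exact h1take hcPt u hu hux ((hQ'mem u).mp huQ')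
    have h3'' : ∀ u ∈ (P.takeUntil x hxP).support, u ∈ (Q1.append Q2).support →
        u ∈ Q1.support ∧ u ≠ y := by
      intro u hu huQ'
      exact h3' u (support_takeUntil_subset _ _ hu) ((hQ'mem u).mp huQ')
    exact coreB (P.takeUntil x hxP) (P.dropUntil x hxP) Q1 Q2
      (by rw [P.take_spec hxP]; exact hP) hQ'l
      (by rw [P.take_spec hxP]; exact hPL) hQ'L
      (fun h => hxQ ((hQ'mem x).mp h)) hcPt ((hQ'mem c).mpr hcQ) h1' h3''
  · intro hcPt
    have hcPd : c ∈ (P.dropUntil x hxP).support := by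
      rcases mem_take_or_drop hxP hcP with h | h
      exacts [absurd h hcPt, h]
    have hPrev : ((P.dropUntil x hxP).reverse).append ((P.takeUntil x hxP).reverse)
        = P.reverse := by rw [← reverse_append, P.take_spec hxP]
    have h1' : ∀ u ∈ ((P.takeUntil x hxP).reverse).support, u ≠ x →
        u ∉ (Q1.append Q2).support := by
      intro u hu hux huQ'
      rw [support_reverse, List.mem_reverse] at hu
      exact h1drop hcPt u hu hux ((hQ'mem u).mp huQ')
    have h3'' : ∀ u ∈ ((P.dropUntil x hxP).reverse).support,
        u ∈ (Q1.append Q2).support → u ∈ Q1.support ∧ u ≠ y := by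
      intro u hu huQ'
      rw [support_reverse, List.mem_reverse] at hu
      exact h3' u (support_dropUntil_subset _ _ hu) ((hQ'mem u).mp huQ')
    have hres := coreB ((P.dropUntil x hxP).reverse) ((P.takeUntil x hxP).reverse) Q1 Q2
      (by rw [hPrev]; exact IsLongestPath.reverse hP) hQ'l
      (by rw [hPrev, length_reverse]; exact hPL) hQ'L
      (fun h => hxQ ((hQ'mem x).mp h))
      (by rwa [support_reverse, List.mem_reverse]) ((hQ'mem c).mpr hcQ) h1' h3''
    rwa [length_reverse] at hres

end LptAux

namespace LptAux

lemma combine_sides {V : Type*} {G : SimpleGraph V} [DecidableEq V]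
    {B : Finset V} {L : ℕ} {a b x c d : V} {P : G.Walk a b}
    (hP : P.IsPath) (hPL : P.length = L) (hxP : x ∈ P.support) (hxB : x ∈ B)
    (hPB : ∀ u ∈ P.support, u ∈ B → u = x)
    (hc : c ∈ P.support) (hcB : c ∉ B) (hd : d ∈ P.support) (hdB : d ∉ B)
    (hcd : ¬ AConn G B c d)
    (Hc : (c ∈ (P.takeUntil x hxP).support → 2 * (P.takeUntil x hxP).length ≥ L + 2) ∧
          (c ∉ (P.takeUntil x hxP).support → 2 * (P.dropUntil x hxP).length ≥ L + 2))
    (Hd : (d ∈ (P.takeUntil x hxP).support → 2 * (P.takeUntil x hxP).length ≥ L + 2) ∧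
          (d ∉ (P.takeUntil x hxP).support → 2 * (P.dropUntil x hxP).length ≥ L + 2)) :
    False := by
  have hsum := take_add_drop_length (P := P) hxP
  rcases side_opposite hP hxP hxB hPB hc hcB hd hdB hcd with ⟨h1, h2, _⟩ | ⟨h1, _, h2⟩
  · have e1 := Hc.1 h1
    have e2 := Hd.2 h2
    omega
  · have e1 := Hc.2 h1
    have e2 := Hd.1 h2
    omega

section Tree

variable {ι : Type*} {T : SimpleGraph ι} [DecidableEq ι]

/-- `a` and `b` are in the same component of `T - t`. -/
def SB (T : SimpleGraph ι) (t a b : ι) : Prop := ∃ w : T.Walk a b, t ∉ w.support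

namespace SB

lemma ne_left {t a b : ι} (h : SB T t a b) : a ≠ t := by
  obtain ⟨w, hw⟩ := h
  exact fun e => hw (e ▸ w.start_mem_support)

lemma ne_right {t a b : ι} (h : SB T t a b) : b ≠ t := by
  obtain ⟨w, hw⟩ := h
  exact fun e => hw (e ▸ w.end_mem_support)

lemma refl {t a : ι} (h : a ≠ t) : SB T t a a :=
  ⟨.nil, by simp [Ne.symm h]⟩

lemma symm {t a b : ι} (h : SB T t a b) : SB T t b a := by
  obtain ⟨w, hw⟩ := h
  exact ⟨w.reverse, by rwa [support_reverse, List.mem_reverse]⟩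

lemma trans {t a b c : ι} (h : SB T t a b) (h' : SB T t b c) : SB T t a c := by
  obtain ⟨w, hw⟩ := h
  obtain ⟨w', hw'⟩ := h'
  refine ⟨w.append w', fun hc => ?_⟩
  rcases (mem_support_append_iff _ _).mp hc with h1 | h1
  exacts [hw h1, hw' h1]

lemma toPath {t a b : ι} (h : SB T t a b) :
    ∃ p : T.Walk a b, p.IsPath ∧ t ∉ p.support := by
  obtain ⟨w, hw⟩ := h
  exact ⟨w.toPath, w.toPath.2, fun hc => hw (support_toPath_subset w hc)⟩

end SB

lemma path_unique (hT : T.IsTree) {u v : ι} (p q : T.Walk u v)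
    (hp : p.IsPath) (hq : q.IsPath) : p = q :=
  (hT.existsUnique_path u v).unique hp hq

lemma nbrs_not_SB (hT : T.IsTree) {t a b : ι} (ha : T.Adj t a) (hb : T.Adj t b)
    (hab : a ≠ b) : ¬ SB T t a b := by
  intro h
  obtain ⟨p, hp, htp⟩ := h.toPath
  have hq : (Walk.cons ha.symm (Walk.cons hb .nil)).IsPath := by
    rw [isPath_def]
    simp only [support_cons, support_nil]
    refine List.nodup_cons.mpr ⟨?_, List.nodup_cons.mpr ⟨?_, List.nodup_singleton _⟩⟩
    · simp only [List.mem_cons, List.mem_singleton, List.not_mem_nil, or_false]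
      push_neg
      exact ⟨fun e => T.irrefl (e ▸ ha), hab⟩
    · simp only [List.mem_singleton, List.mem_cons, List.not_mem_nil, or_false]
      exact fun e => T.irrefl (e ▸ hb)
  have heq := path_unique hT p _ hp hq
  rw [heq] at htp
  simp at htp

lemma exists_branch_nbr (hT : T.IsTree) {t s : ι} (hts : t ≠ s) :
    ∃ t', T.Adj t t' ∧ SB T t t' s := by
  obtain ⟨w⟩ := hT.isConnected.preconnected t s
  have hppath : (w.toPath : T.Walk t s).IsPath := w.toPath.2
  have hnn : ¬ (w.toPath : T.Walk t s).Nil := fun h =>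
    hts (Walk.eq_of_length_eq_zero (Walk.nil_iff_length_eq.mp h))
  obtain ⟨t', hadj, q, hq⟩ := Walk.not_nil_iff.mp hnn
  refine ⟨t', hadj, q, ?_⟩
  have h2 := hppath
  rw [hq, cons_isPath_iff] at h2
  exact h2.2

lemma not_SB_both (hT : T.IsTree) {t t' s : ι} (h : T.Adj t t')
    (h1 : SB T t s t') (h2 : SB T t' s t) : False := by
  obtain ⟨p1, hp1, hp1t'⟩ := h2.toPath
  obtain ⟨q, hq, hqt⟩ := h1.toPath
  have hcons : (Walk.cons h.symm (.nil : T.Walk t t)).IsPath := by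
    rw [cons_isPath_iff]
    refine ⟨IsPath.nil, ?_⟩
    simp only [support_nil, List.mem_singleton]
    exact fun e => T.irrefl (e ▸ h)
  have hq2 : (q.append (Walk.cons h.symm .nil)).IsPath := by
    refine isPath_append_of_inter hq hcons ?_
    intro v hv hv'
    simp only [support_cons, support_nil, List.mem_cons, List.mem_singleton,
      List.not_mem_nil, or_false] at hv'
    rcases hv' with e | e
    · exact e
    · exact absurd (e ▸ hv) hqt
  have heq := path_unique hT p1 _ hp1 hq2
  apply hp1t'
  rw [heq, mem_support_append_iff]
  exact Or.inl q.end_mem_support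

lemma SB_shrink (hT : T.IsTree) {t t' t'' s : ι} (h1 : T.Adj t t') (h2 : T.Adj t' t'')
    (hne : t ≠ t'') (hs : SB T t' s t'') : SB T t s t' := by
  obtain ⟨p, hp, hpt'⟩ := hs.toPath
  have htp : t ∉ p.support := by
    intro hc
    have h4 : SB T t' t s := ⟨(p.takeUntil t hc).reverse, by
      rw [support_reverse, List.mem_reverse]
      exact fun hh => hpt' (support_takeUntil_subset _ _ hh)⟩
    exact nbrs_not_SB hT h1.symm h2 hne (h4.trans hs)
  refine ⟨p.append (Walk.cons h2.symm .nil), ?_⟩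
  rw [mem_support_append_iff]
  rintro (hc | hc)
  · exact htp hc
  · simp only [support_cons, support_nil, List.mem_cons, List.mem_singleton,
      List.not_mem_nil, or_false] at hc
    rcases hc with e | e
    · exact hne e
    · exact T.irrefl (e ▸ h1)

end Tree

end LptAux

namespace LptAux

section Decomp

variable {V ι : Type*} {G : SimpleGraph V} {T : SimpleGraph ι}
  [DecidableEq V] [DecidableEq ι] (D : TreeDecomp G T)

lemma bag_SB (t : ι) {v : V} (hv : v ∉ D.bag t) {s s' : ι}
    (hs : v ∈ D.bag s) (hs' : v ∈ D.bag s') : SB T t s s' := by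
  obtain ⟨w⟩ := D.bag_conn v ⟨s, hs⟩ ⟨s', hs'⟩
  refine ⟨w.map (SimpleGraph.Embedding.induce {t | v ∈ D.bag t}).toHom, ?_⟩
  intro hc
  replace hc : t ∈ (w.map (SimpleGraph.Embedding.induce {t | v ∈ D.bag t}).toHom).support := hc
  rw [Walk.support_map, List.mem_map] at hc
  obtain ⟨u, hu, hut⟩ := hc
  apply hv
  have hmem : v ∈ D.bag (u : ι) := u.2
  rw [← hut]
  exact hmem

lemma gwalk_SB (t : ι) : ∀ {u v : V} (w : G.Walk u v), (∀ z ∈ w.support, z ∉ D.bag t) →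
    ∀ {s s' : ι}, u ∈ D.bag s → v ∈ D.bag s' → SB T t s s' := by
  intro u v w
  induction w with
  | nil =>
    intro hw s s' hs hs'
    exact bag_SB D t (hw _ (by simp)) hs hs'
  | @cons u c v h p ih =>
    intro hw s s' hs hs'
    obtain ⟨s₀, hus₀, hcs₀⟩ := D.bag_edge h
    have h1 : SB T t s s₀ := bag_SB D t (hw u (by simp)) hs hus₀
    have h2 : SB T t s₀ s' :=
      ih (fun z hz => hw z (by rw [support_cons]; exact List.mem_cons_of_mem _ hz)) hcs₀ hs'
    exact h1.trans h2

lemma bag_step (hT : T.IsTree) {t t' : ι} (hadj : T.Adj t t') {x : V} {s : ι}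
    (hxt : x ∈ D.bag t) (hxs : x ∈ D.bag s) (hSB : SB T t s t') : x ∈ D.bag t' := by
  obtain ⟨w⟩ := D.bag_conn x ⟨t, hxt⟩ ⟨s, hxs⟩
  set p0 : T.Walk t s := w.map (SimpleGraph.Embedding.induce {n | x ∈ D.bag n}).toHom with hp0
  have hall : ∀ n ∈ p0.support, x ∈ D.bag n := by
    intro n hn
    replace hn : n ∈ (w.map (SimpleGraph.Embedding.induce {n | x ∈ D.bag n}).toHom).support := hn
    rw [Walk.support_map, List.mem_map] at hn
    obtain ⟨u, hu, hut⟩ := hn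
    have hmem : x ∈ D.bag (u : ι) := u.2
    rw [← hut]
    exact hmem
  have hallp : ∀ n ∈ (p0.toPath : T.Walk t s).support, x ∈ D.bag n :=
    fun n hn => hall n (support_toPath_subset _ hn)
  have hts : t ≠ s := (hSB.ne_left).symm
  have hppath : (p0.toPath : T.Walk t s).IsPath := p0.toPath.2
  have hnn : ¬ (p0.toPath : T.Walk t s).Nil := fun h =>
    hts (Walk.eq_of_length_eq_zero (Walk.nil_iff_length_eq.mp h))
  obtain ⟨t₂, hadj2, q, hq⟩ := Walk.not_nil_iff.mp hnn
  have hqp := hppath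
  rw [hq, cons_isPath_iff] at hqp
  have hSB2 : SB T t t₂ s := ⟨q, hqp.2⟩
  have het : t₂ = t' := by
    by_contra hne
    exact nbrs_not_SB hT hadj2 hadj hne (hSB2.trans hSB)
  have ht₂mem : t₂ ∈ (p0.toPath : T.Walk t s).support := by
    rw [hq, support_cons]
    exact List.mem_cons_of_mem _ q.start_mem_support
  exact het ▸ hallp t₂ ht₂mem

/-- A walk `P` lives (bag-wise) in the branch of `T - t` containing `t'`. -/
def LivesIn (t t' : ι) {a b : V} (P : G.Walk a b) : Prop :=
  ∀ u ∈ P.support, ∀ s, u ∈ D.bag s → SB T t s t'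

lemma livesIn_of_avoid (hT : T.IsTree) (t : ι) {a b : V} (P : G.Walk a b)
    (hP : ∀ z ∈ P.support, z ∉ D.bag t) :
    ∃ t', T.Adj t t' ∧ LivesIn D t t' P := by
  obtain ⟨s₀, hs₀⟩ := D.bag_cover a
  have hs₀t : t ≠ s₀ := fun e => hP a P.start_mem_support (e ▸ hs₀)
  obtain ⟨t', hadj, hSB⟩ := exists_branch_nbr hT hs₀t
  refine ⟨t', hadj, ?_⟩
  intro u hu s hs
  have hwalk : SB T t s s₀ := by
    refine gwalk_SB D t (P.takeUntil u hu).reverse ?_ hs hs₀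
    intro z hz
    rw [support_reverse, List.mem_reverse] at hz
    exact hP z (support_takeUntil_subset _ _ hz)
  exact hwalk.trans hSB.symm

lemma disjoint_of_livesIn (hT : T.IsTree) {t t' : ι} (hadj : T.Adj t t')
    {a b a' b' : V} {P : G.Walk a b} {Q : G.Walk a' b'}
    (h1 : LivesIn D t t' P) (h2 : LivesIn D t' t Q) :
    ∀ u, u ∈ P.support → u ∈ Q.support → False := by
  intro u hu hq
  obtain ⟨s, hs⟩ := D.bag_cover u
  exact not_SB_both hT hadj (h1 u hu s hs) (h2 u hq s hs)

lemma exists_good_bag [Fintype V] [Fintype ι] (hT : T.IsTree) (hconn : G.Connected)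
    (hcon : ∀ t : ι, ∃ (a b : V) (P : G.Walk a b), IsLongestPath G P ∧
      ∀ z ∈ P.support, z ∉ D.bag t) : False := by
  haveI : Nonempty ι := hT.isConnected.nonempty
  have main : ∀ (n : ℕ) (t t' : ι), T.Adj t t' →
      (∃ (a b : V) (P : G.Walk a b), IsLongestPath G P ∧
        (∀ z ∈ P.support, z ∉ D.bag t) ∧ LivesIn D t t' P) →
      {s | SB T t s t'}.ncard ≤ n → False := by
    intro n
    induction n with
    | zero =>
      intro t t' hadj _ hcard
      have hmem : t' ∈ {s | SB T t s t'} := SB.refl (fun h => T.irrefl (h ▸ hadj))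
      have hpos : 0 < {s | SB T t s t'}.ncard :=
        (Set.ncard_pos (Set.toFinite _)).mpr ⟨t', hmem⟩
      omega
    | succ n ih =>
      rintro t t' hadj ⟨a, b, P, hPl, hPav, hPlive⟩ hcard
      obtain ⟨a', b', Q, hQl, hQav⟩ := hcon t'
      obtain ⟨t'', hadj2, hQlive⟩ := livesIn_of_avoid D hT t' Q hQav
      by_cases he : t'' = t
      · subst he
        obtain ⟨v, hv1, hv2⟩ := longest_paths_intersect hconn hPl hQl
        exact disjoint_of_livesIn D hT hadj hPlive hQlive v hv1 hv2
      · have hsubset : {s | SB T t' s t''} ⊆ {s | SB T t s t'} :=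
          fun s hs => SB_shrink hT hadj hadj2 (Ne.symm he) hs
        have hmem : t' ∈ {s | SB T t s t'} := SB.refl (fun h => T.irrefl (h ▸ hadj))
        have hnot : t' ∉ {s | SB T t' s t''} := fun h => (SB.ne_left h) rfl
        have hssub : {s | SB T t' s t''} ⊂ {s | SB T t s t'} :=
          (Set.ssubset_iff_of_subset hsubset).mpr ⟨t', hmem, hnot⟩
        have hlt : {s | SB T t' s t''}.ncard < {s | SB T t s t'}.ncard :=
          Set.ncard_lt_ncard hssub (Set.toFinite _)
        exact ih t' t'' hadj2 ⟨a', b', Q, hQl, hQav, hQlive⟩ (by omega)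
  obtain ⟨a, b, P, hPl, hPav⟩ := hcon (Classical.arbitrary ι)
  obtain ⟨t₁, hadj, hlive⟩ := livesIn_of_avoid D hT _ P hPav
  exact main _ _ t₁ hadj ⟨a, b, P, hPl, hPav, hlive⟩ le_rfl

end Decomp

end LptAux


open LptAux

/-- If a finite connected graph `G` with at least two vertices admits a tree
decomposition of width at most `k` (with `k ≥ 1`), then `lpt(G) ≤ k`: some set of at
most `k` vertices meets every longest path of `G`. -/
theorem lpt_le_treewidth {V ι : Type*} [Fintype V] [Fintype ι]
    (G : SimpleGraph V) (T : SimpleGraph ι) (hconn : G.Connected)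
    (hcard : 2 ≤ Fintype.card V) (k : ℕ) (hk : 1 ≤ k)
    (D : TreeDecomp G T) (hwidth : ∀ t : ι, (D.bag t).card ≤ k + 1) :
    ∃ S : Finset V, S.card ≤ k ∧
      ∀ ⦃u v : V⦄ (p : G.Walk u v), IsLongestPath G p → ∃ x ∈ S, x ∈ p.support := by
  classical
  -- Step 1: a bag meeting all longest paths
  have hstep : ∃ t : ι, ∀ (a b : V) (P : G.Walk a b), IsLongestPath G P →
      ∃ v ∈ P.support, v ∈ D.bag t := by
    by_contra hc
    push_neg at hc
    refine exists_good_bag D D.isTree hconn (fun t => ?_)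
    obtain ⟨a, b, P, hP, hv⟩ := hc t
    exact ⟨a, b, P, hP, hv⟩
  obtain ⟨t₀, ht₀⟩ := hstep
  by_cases hsmall : (D.bag t₀).card ≤ k
  · refine ⟨D.bag t₀, hsmall, ?_⟩
    intro u v p hp
    obtain ⟨w, hw1, hw2⟩ := ht₀ u v p hp
    exact ⟨w, hw2, hw1⟩
  · set B := D.bag t₀ with hBdef
    have hBcard : B.card = k + 1 := le_antisymm (hwidth t₀) (by omega)
    by_contra hgoal
    push_neg at hgoal
    -- family of private longest paths
    have hfam : ∀ x ∈ B, ∃ (a b : V) (P : G.Walk a b), IsLongestPath G P ∧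
        x ∈ P.support ∧ (∀ u ∈ P.support, u ∈ B → u = x) := by
      intro x hx
      obtain ⟨u, v, P, hP, hmiss⟩ := hgoal (B.erase x)
        (by rw [Finset.card_erase_of_mem hx, hBcard]; omega)
      have hxP : x ∈ P.support := by
        obtain ⟨w, hw1, hw2⟩ := ht₀ u v P hP
        have hwx : w = x := by
          by_contra hne
          exact hmiss w (Finset.mem_erase.mpr ⟨hne, hw2⟩) hw1
        exact hwx ▸ hw1
      refine ⟨u, v, P, hP, hxP, ?_⟩
      intro w hw hwB
      by_contra hne
      exact hmiss w (Finset.mem_erase.mpr ⟨hne, hwB⟩) hw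
    choose Pa Pb PP hPlong hPmem hPB using hfam
    haveI : Nonempty V := Fintype.card_pos_iff.mp (by omega)
    obtain ⟨a₀, b₀, P₀, hP₀⟩ := exists_longest G
    set L := P₀.length with hL
    have hlenx : ∀ x (hx : x ∈ B), (PP x hx).length = L :=
      fun x hx => longest_length_eq (hPlong x hx) hP₀
    have hinter : ∀ x (hx : x ∈ B) y (hy : y ∈ B), x ≠ y →
        ∃ v, v ∈ (PP x hx).support ∧ v ∈ (PP y hy).support ∧ v ∉ B := by
      intro x hx y hy hxy
      obtain ⟨v, h1, h2⟩ := longest_paths_intersect hconn (hPlong x hx) (hPlong y hy)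
      refine ⟨v, h1, h2, ?_⟩
      intro hvB
      exact hxy ((hPB x hx v h1 hvB).symm.trans (hPB y hy v h2 hvB))
    by_cases hcom : ∃ c₀, c₀ ∉ B ∧ ∀ x (hx : x ∈ B),
        ∃ u ∈ (PP x hx).support, u ∉ B ∧ AConn G B u c₀
    · -- COMMON COMPONENT CASE: descent in the tree
      obtain ⟨c₀, hc₀B, htouch⟩ := hcom
      obtain ⟨s₀, hs₀⟩ := D.bag_cover c₀
      have hentry : ∀ x (hx : x ∈ B), ∃ c, G.Adj x c ∧ c ∉ B ∧ AConn G B c c₀ := by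
        intro x hx
        obtain ⟨u, huP, huB, huc⟩ := htouch x hx
        have hxP := hPmem x hx
        have hux : u ≠ x := fun e => huB (e ▸ hx)
        rcases mem_take_or_drop hxP huP with hs | hs
        · obtain ⟨c, hadj, hcB, hconn'⟩ := exists_entry
            (((PP x hx).takeUntil x hxP).reverse) ((hPlong x hx).1.takeUntil _).reverse
            (fun v hv hvB => by
              rw [support_reverse, List.mem_reverse] at hv
              exact hPB x hx v (support_takeUntil_subset _ _ hv) hvB)
            (by rwa [support_reverse, List.mem_reverse]) hux
          exact ⟨c, hadj, hcB, hconn'.trans huc⟩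
        · obtain ⟨c, hadj, hcB, hconn'⟩ := exists_entry
            ((PP x hx).dropUntil x hxP) ((hPlong x hx).1.dropUntil _)
            (fun v hv hvB => hPB x hx v (support_dropUntil_subset _ _ hv) hvB)
            hs hux
          exact ⟨c, hadj, hcB, hconn'.trans huc⟩
      have hstep2 : ∀ t : ι, D.bag t = B → ∀ t', T.Adj t t' → SB T t t' s₀ →
          B ⊆ D.bag t' := by
        intro t hbag t' hadj hSB x hx
        obtain ⟨c, hadj', hcB, hcc₀⟩ := hentry x hx
        obtain ⟨s, hxs, hcs⟩ := D.bag_edge hadj'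
        obtain ⟨wc, hwc⟩ := hcc₀
        have hSBs : SB T t s s₀ :=
          gwalk_SB D t wc (fun z hz => by rw [hbag]; exact hwc z hz) hcs hs₀
        have hSBst' : SB T t s t' := hSBs.trans hSB.symm
        exact bag_step D D.isTree hadj (hbag.symm ▸ hx) hxs hSBst'
      have hdesc : ∀ (n : ℕ) (t : ι), D.bag t = B →
          ∀ (p : T.Walk t s₀), p.IsPath → p.length ≤ n → False := by
        intro n
        induction n with
        | zero =>
          intro t hbag p hp hlen
          have hts : t = s₀ := Walk.eq_of_length_eq_zero (Nat.le_zero.mp hlen)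
          exact hc₀B (hbag ▸ (hts ▸ hs₀))
        | succ n ih =>
          intro t hbag p hp hlen
          have hts : t ≠ s₀ := fun e => hc₀B (hbag ▸ (e ▸ hs₀))
          have hnn : ¬ p.Nil := fun h =>
            hts (Walk.eq_of_length_eq_zero (Walk.nil_iff_length_eq.mp h))
          obtain ⟨t', hadj, q, hq⟩ := Walk.not_nil_iff.mp hnn
          have hqp := hp
          rw [hq, cons_isPath_iff] at hqp
          have hSB : SB T t t' s₀ := ⟨q, hqp.2⟩
          have hsubset := hstep2 t hbag t' hadj hSB
          have hbag' : D.bag t' = B :=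
            (Finset.eq_of_subset_of_card_le hsubset
              (by rw [hBcard]; exact hwidth t')).symm
          apply ih t' hbag' q hqp.1
          have hlq := congrArg Walk.length hq
          rw [length_cons] at hlq
          omega
      obtain ⟨w0⟩ := D.isTree.isConnected.preconnected t₀ s₀
      exact hdesc (w0.toPath : T.Walk t₀ s₀).length t₀ rfl _ w0.toPath.2 le_rfl
    · -- TRIANGLE CASE
      push_neg at hcom
      have h2le : 1 < B.card := by omega
      obtain ⟨x, hxB, y, hyB, hxy⟩ := Finset.one_lt_card.mp h2le
      obtain ⟨v₁, hv₁x, hv₁y, hv₁B⟩ := hinter x hxB y hyB hxy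
      obtain ⟨z, hzB, hz⟩ := hcom v₁ hv₁B
      have hzx : z ≠ x := by
        intro e; subst e
        exact hz v₁ hv₁x hv₁B (AConn.refl hv₁B)
      have hzy : z ≠ y := by
        intro e; subst e
        exact hz v₁ hv₁y hv₁B (AConn.refl hv₁B)
      have hxz : x ≠ z := fun e => hzx e.symm
      have hyz : y ≠ z := fun e => hzy e.symm
      obtain ⟨v₂, hv₂x, hv₂z, hv₂B⟩ := hinter x hxB z hzB hxz
      obtain ⟨v₃, hv₃y, hv₃z, hv₃B⟩ := hinter y hyB z hzB hyz
      have hv₂v₁ : ¬ AConn G B v₂ v₁ := hz v₂ hv₂z hv₂B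
      have hv₃v₁ : ¬ AConn G B v₃ v₁ := hz v₃ hv₃z hv₃B
      have hnotB2 : ∀ u, u ∈ (PP z hzB).support → u ∈ (PP x hxB).support → u ∉ B := by
        intro u hu hux hB
        exact hzx ((hPB z hzB u hu hB).symm.trans (hPB x hxB u hux hB))
      by_cases hc23 : AConn G B v₂ v₃
      · obtain ⟨w, hwB, hw⟩ := hcom v₂ hv₂B
        have hwx : w ≠ x := by
          intro e; subst e
          exact hw v₂ hv₂x hv₂B (AConn.refl hv₂B)
        have hwz : w ≠ z := by
          intro e; subst e
          exact hw v₂ hv₂z hv₂B (AConn.refl hv₂B)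
        have hwy : w ≠ y := by
          intro e; subst e
          exact hw v₃ hv₃y hv₃B hc23.symm
        obtain ⟨u₁, hu₁w, hu₁x, hu₁B⟩ := hinter w hwB x hxB hwx
        obtain ⟨u₂, hu₂w, hu₂z, hu₂B⟩ := hinter w hwB z hzB hwz
        have hu₂v₁ : ¬ AConn G B u₂ v₁ := hz u₂ hu₂z hu₂B
        have hu₁v₂ : ¬ AConn G B u₁ v₂ := hw u₁ hu₁w hu₁B
        have hu₂v₂ : ¬ AConn G B u₂ v₂ := hw u₂ hu₂w hu₂B
        have hu₁v₁ : AConn G B u₁ v₁ := by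
          rcases conn_rep (hPlong x hxB).1 (hPmem x hxB) hxB (hPB x hxB)
            hv₁x hv₁B hv₂x hv₂B (fun h => hv₂v₁ h.symm) u₁ hu₁x hu₁B with h | h
          · exact h
          · exact absurd h hu₁v₂
        have hu₁u₂ : ¬ AConn G B u₁ u₂ := fun h => hu₂v₁ (h.symm.trans hu₁v₁)
        have HA := Babs (hPlong z hzB) (hPlong x hxB) (hlenx z hzB) (hlenx x hxB)
          hzB hxB hzx (hPmem z hzB) (hPmem x hxB) (hPB z hzB) (hPB x hxB)
          hv₂z hv₂x hv₂B
          (by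
            intro u hu hux
            have huB : u ∉ B := hnotB2 u hu hux
            rcases conn_rep (hPlong x hxB).1 (hPmem x hxB) hxB (hPB x hxB)
              hv₁x hv₁B hv₂x hv₂B (fun h => hv₂v₁ h.symm) u hux huB with h | h
            · exact absurd h (hz u hu huB)
            · exact h)
          (side_iff_of_two (hPlong z hzB).1 (hPmem z hzB) hzB (hPB z hzB)
            hv₂z hv₂B hu₂z hu₂B (fun h => hu₂v₂ h.symm))
          (side_iff_of_two (hPlong x hxB).1 (hPmem x hxB) hxB (hPB x hxB)
            hv₂x hv₂B hv₁x hv₁B hv₂v₁)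
        have HB := Babs (hPlong z hzB) (hPlong w hwB) (hlenx z hzB) (hlenx w hwB)
          hzB hwB (fun e => hwz e.symm) (hPmem z hzB) (hPmem w hwB)
          (hPB z hzB) (hPB w hwB)
          hu₂z hu₂w hu₂B
          (by
            intro u hu huw
            have huB : u ∉ B := by
              intro hB
              exact hwz ((hPB w hwB u huw hB).symm.trans (hPB z hzB u hu hB))
            rcases conn_rep (hPlong w hwB).1 (hPmem w hwB) hwB (hPB w hwB)
              hu₁w hu₁B hu₂w hu₂B hu₁u₂ u huw huB with h | h
            · exact absurd (h.trans hu₁v₁) (hz u hu huB)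
            · exact h)
          (side_iff_of_two (hPlong z hzB).1 (hPmem z hzB) hzB (hPB z hzB)
            hu₂z hu₂B hv₂z hv₂B hu₂v₂)
          (side_iff_of_two (hPlong w hwB).1 (hPmem w hwB) hwB (hPB w hwB)
            hu₂w hu₂B hu₁w hu₁B (fun h => hu₁u₂ h.symm))
        exact combine_sides (hPlong z hzB).1 (hlenx z hzB) (hPmem z hzB) hzB (hPB z hzB)
          hv₂z hv₂B hu₂z hu₂B (fun h => hu₂v₂ h.symm) HA HB
      · have HA := Babs (hPlong z hzB) (hPlong x hxB) (hlenx z hzB) (hlenx x hxB)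
          hzB hxB hzx (hPmem z hzB) (hPmem x hxB) (hPB z hzB) (hPB x hxB)
          hv₂z hv₂x hv₂B
          (by
            intro u hu hux
            have huB : u ∉ B := hnotB2 u hu hux
            rcases conn_rep (hPlong x hxB).1 (hPmem x hxB) hxB (hPB x hxB)
              hv₁x hv₁B hv₂x hv₂B (fun h => hv₂v₁ h.symm) u hux huB with h | h
            · exact absurd h (hz u hu huB)
            · exact h)
          (side_iff_of_two (hPlong z hzB).1 (hPmem z hzB) hzB (hPB z hzB)
            hv₂z hv₂B hv₃z hv₃B hc23)
          (side_iff_of_two (hPlong x hxB).1 (hPmem x hxB) hxB (hPB x hxB)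
            hv₂x hv₂B hv₁x hv₁B hv₂v₁)
        have HB := Babs (hPlong z hzB) (hPlong y hyB) (hlenx z hzB) (hlenx y hyB)
          hzB hyB hzy (hPmem z hzB) (hPmem y hyB) (hPB z hzB) (hPB y hyB)
          hv₃z hv₃y hv₃B
          (by
            intro u hu huy
            have huB : u ∉ B := by
              intro hB
              exact hzy ((hPB z hzB u hu hB).symm.trans (hPB y hyB u huy hB))
            rcases conn_rep (hPlong y hyB).1 (hPmem y hyB) hyB (hPB y hyB)
              hv₁y hv₁B hv₃y hv₃B (fun h => hv₃v₁ h.symm) u huy huB with h | h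
            · exact absurd h (hz u hu huB)
            · exact h)
          (side_iff_of_two (hPlong z hzB).1 (hPmem z hzB) hzB (hPB z hzB)
            hv₃z hv₃B hv₂z hv₂B (fun h => hc23 h.symm))
          (side_iff_of_two (hPlong y hyB).1 (hPmem y hyB) hyB (hPB y hyB)
            hv₃y hv₃B hv₁y hv₁B hv₃v₁)
        exact combine_sides (hPlong z hzB).1 (hlenx z hzB) (hPmem z hzB) hzB (hPB z hzB)
          hv₂z hv₂B hv₃z hv₃B hc23 HA HB
end

section
/- Let G be a finite connected graph and let (T, {V_t}_{t ∈ V(T)}) be a tree decomposition of G. Then there exists a node t ∈ V(T) such that the bag V_t is a longest path transversal of G, i.e., every longest path of G contains a vertex of V_t. -/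
open SimpleGraph

section Aux

variable {V : Type*} {G : SimpleGraph V}

/-- Appending two paths that meet only in the common endpoint gives a path. -/
lemma aux_isPath_append {a b c : V} {p : G.Walk a b} {q : G.Walk b c}
    (hp : p.IsPath) (hq : q.IsPath)
    (h : ∀ x, x ∈ p.support → x ∈ q.support → x = b) : (p.append q).IsPath := by
  apply Walk.IsPath.mk'
  rw [Walk.support_append]
  refine List.Nodup.append hp.support_nodup hq.support_nodup.tail ?_
  intro x hxp hxq
  have hxq' : x ∈ q.support := List.mem_of_mem_tail hxq
  have hxb : x = b := h x hxp hxq'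
  subst hxb
  have hnd := hq.support_nodup
  rw [q.support_eq_cons] at hnd
  exact (List.nodup_cons.mp hnd).1 hxq

/-- Half of a path from a vertex on it, of length at least half the path. -/
lemma aux_exists_half [DecidableEq V] {u v : V} (P : G.Walk u v) (hP : P.IsPath) (x : V)
    (hx : x ∈ P.support) :
    ∃ (w : V) (A : G.Walk x w), A.IsPath ∧ (∀ z ∈ A.support, z ∈ P.support) ∧
      P.length ≤ 2 * A.length := by
  have hsplit : (P.takeUntil x hx).length + (P.dropUntil x hx).length = P.length := by
    have := congrArg Walk.length (P.take_spec hx)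
    rwa [Walk.length_append] at this
  by_cases hc : (P.dropUntil x hx).length ≤ (P.takeUntil x hx).length
  · refine ⟨u, (P.takeUntil x hx).reverse, (hP.takeUntil hx).reverse, ?_, ?_⟩
    · intro z hz
      rw [Walk.support_reverse, List.mem_reverse] at hz
      exact P.support_takeUntil_subset hx hz
    · rw [Walk.length_reverse]; omega
  · exact ⟨v, P.dropUntil x hx, hP.dropUntil hx,
      fun z hz => P.support_dropUntil_subset hx hz, by omega⟩

/-- Any two longest paths of a connected graph intersect. -/
lemma aux_longest_paths_intersect {u v a b : V} (hconn : G.Connected)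
    {P : G.Walk u v} {Q : G.Walk a b} (hP : IsLongestPath G P) (hQ : IsLongestPath G Q) :
    ∃ z, z ∈ P.support ∧ z ∈ Q.support := by
  classical
  by_contra hdisj
  push_neg at hdisj
  have hex : ∃ n, ∃ x y, x ∈ P.support ∧ y ∈ Q.support ∧
      ∃ R : G.Walk x y, R.IsPath ∧ R.length = n := by
    obtain ⟨w⟩ := hconn u a
    exact ⟨(w.toPath : G.Walk u a).length, u, a, P.start_mem_support, Q.start_mem_support,
      w.toPath, w.toPath.prop, rfl⟩
  obtain ⟨x, y, hxP, hyQ, R, hR, hRlen⟩ := Nat.find_spec hex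
  have hPmeet : ∀ z ∈ R.support, z ∈ P.support → z = x := by
    intro z hzR hzP
    by_contra hzx
    have h1 : (R.takeUntil z hzR).length + (R.dropUntil z hzR).length = R.length := by
      have := congrArg Walk.length (R.take_spec hzR)
      rwa [Walk.length_append] at this
    have h2 : 1 ≤ (R.takeUntil z hzR).length := by
      rcases Nat.eq_zero_or_pos (R.takeUntil z hzR).length with h | h
      · exact absurd (Walk.eq_of_length_eq_zero h).symm hzx
      · exact h
    exact Nat.find_min hex (by omega : (R.dropUntil z hzR).length < Nat.find hex)
      ⟨z, y, hzP, hyQ, R.dropUntil z hzR, hR.dropUntil hzR, rfl⟩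
  have hQmeet : ∀ z ∈ R.support, z ∈ Q.support → z = y := by
    intro z hzR hzQ
    by_contra hzy
    have h1 : (R.takeUntil z hzR).length + (R.dropUntil z hzR).length = R.length := by
      have := congrArg Walk.length (R.take_spec hzR)
      rwa [Walk.length_append] at this
    have h2 : 1 ≤ (R.dropUntil z hzR).length := by
      rcases Nat.eq_zero_or_pos (R.dropUntil z hzR).length with h | h
      · exact absurd (Walk.eq_of_length_eq_zero h) hzy
      · exact h
    exact Nat.find_min hex (by omega : (R.takeUntil z hzR).length < Nat.find hex)
      ⟨x, z, hxP, hzQ, R.takeUntil z hzR, hR.takeUntil hzR, rfl⟩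
  have hxy : x ≠ y := by
    intro h
    exact hdisj x hxP (h ▸ hyQ)
  have hR1 : 1 ≤ R.length := by
    rcases Nat.eq_zero_or_pos R.length with h | h
    · exact absurd (Walk.eq_of_length_eq_zero h) hxy
    · exact h
  obtain ⟨w₁, A, hA, hAsub, hAlen⟩ := aux_exists_half P hP.1 x hxP
  obtain ⟨w₂, B, hB, hBsub, hBlen⟩ := aux_exists_half Q hQ.1 y hyQ
  have hRB : (R.append B).IsPath :=
    aux_isPath_append hR hB (fun z hzR hzB => hQmeet z hzR (hBsub z hzB))
  have hW : (A.reverse.append (R.append B)).IsPath := by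
    apply aux_isPath_append hA.reverse hRB
    intro z hzA hzRB
    rw [Walk.support_reverse, List.mem_reverse] at hzA
    rw [Walk.mem_support_append_iff] at hzRB
    rcases hzRB with h | h
    · exact hPmeet z h (hAsub z hzA)
    · exact absurd (hBsub z h) (hdisj z (hAsub z hzA))
  have hle := hP.2 _ hW
  have heq : P.length ≤ Q.length := hQ.2 P hP.1
  rw [Walk.length_append, Walk.length_append, Walk.length_reverse] at hle
  omega

end Aux

section Tree

variable {ι : Type*} {T : SimpleGraph ι}

/-- A set of tree nodes is convex: it contains any path between its members. -/
def TConv (T : SimpleGraph ι) (s : Set ι) : Prop :=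
  ∀ a ∈ s, ∀ b ∈ s, ∀ p : T.Walk a b, p.IsPath → ∀ x ∈ p.support, x ∈ s

/-- A set of tree nodes is walk-connected within itself. -/
def TGood (T : SimpleGraph ι) (s : Set ι) : Prop :=
  ∀ a ∈ s, ∀ b ∈ s, ∃ w : T.Walk a b, ∀ x ∈ w.support, x ∈ s

lemma TGood.tconv (hT : T.IsAcyclic) {s : Set ι} (h : TGood T s) : TConv T s := by
  classical
  intro a ha b hb p hp x hx
  obtain ⟨w, hw⟩ := h a ha b hb
  have heq : (⟨p, hp⟩ : T.Path a b) = w.toPath := hT.path_unique _ _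
  have hx2 : x ∈ (w.toPath : T.Walk a b).support := by
    have := congrArg (fun z : T.Path a b => (z : T.Walk a b)) heq
    simp only at this
    rw [← this]
    exact hx
  exact hw x (w.support_toPath_subset hx2)

lemma TGood.union {s₁ s₂ : Set ι} (h₁ : TGood T s₁) (h₂ : TGood T s₂)
    (hmeet : (s₁ ∩ s₂).Nonempty) : TGood T (s₁ ∪ s₂) := by
  obtain ⟨t₀, ht₁, ht₂⟩ := hmeet
  have conn : ∀ a ∈ s₁ ∪ s₂, ∃ w : T.Walk a t₀, ∀ x ∈ w.support, x ∈ s₁ ∪ s₂ := by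
    intro a ha
    rcases ha with ha | ha
    · obtain ⟨w, hw⟩ := h₁ a ha t₀ ht₁
      exact ⟨w, fun x hx => Or.inl (hw x hx)⟩
    · obtain ⟨w, hw⟩ := h₂ a ha t₀ ht₂
      exact ⟨w, fun x hx => Or.inr (hw x hx)⟩
  intro a ha b hb
  obtain ⟨w1, hw1⟩ := conn a ha
  obtain ⟨w2, hw2⟩ := conn b hb
  refine ⟨w1.append w2.reverse, ?_⟩
  intro x hx
  rw [Walk.mem_support_append_iff] at hx
  rcases hx with h | h
  · exact hw1 x h
  · exact hw2 x (by rwa [Walk.support_reverse, List.mem_reverse] at h)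

lemma aux_chain {Sp Sq : Set ι} {b c : ι} (w : T.Walk b c) :
    b ∈ Sp → c ∈ Sq → (∀ x ∈ w.support, x ∈ Sp ∪ Sq) →
    ∃ x y, x ∈ Sp ∧ y ∈ Sq ∧ x ∈ w.support ∧ y ∈ w.support ∧ (x = y ∨ T.Adj x y) := by
  induction w with
  | nil =>
    intro hb hc _
    exact ⟨_, _, hb, hc, by simp, by simp, Or.inl rfl⟩
  | @cons u d c hadj p ih =>
    intro hb hc hall
    rcases hall d (by simp) with hd | hd
    · obtain ⟨x, y, h1, h2, h3, h4, h5⟩ := ih hd hc (fun x hx => hall x (by simp [hx]))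
      exact ⟨x, y, h1, h2, by simp [h3], by simp [h4], h5⟩
    · exact ⟨u, d, hb, hd, by simp, by simp, Or.inr hadj⟩

/-- Median of three vertices of a tree: a common vertex of the three connecting paths. -/
lemma aux_median (hT : T.IsAcyclic) {a b c : ι} {p : T.Walk a b} {q : T.Walk a c}
    {r : T.Walk b c} (hp : p.IsPath) (hq : q.IsPath) (hr : r.IsPath) :
    ∃ m, m ∈ p.support ∧ m ∈ q.support ∧ m ∈ r.support := by
  classical
  have hrsub : ∀ x ∈ r.support, x ∈ p.support ∨ x ∈ q.support := by
    have heq : (⟨r, hr⟩ : T.Path b c) = (p.reverse.append q).toPath := hT.path_unique _ _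
    intro x hx
    have hx2 : x ∈ ((p.reverse.append q).toPath : T.Walk b c).support := by
      have := congrArg (fun z : T.Path b c => (z : T.Walk b c)) heq
      simp only at this
      rw [← this]
      exact hx
    have hx3 := (p.reverse.append q).support_toPath_subset hx2
    rw [Walk.mem_support_append_iff] at hx3
    rcases hx3 with h | h
    · left; rwa [Walk.support_reverse, List.mem_reverse] at h
    · right; exact h
  obtain ⟨x, y, hxp, hyq, hxr, hyr, hcase⟩ :=
    aux_chain (Sp := {z | z ∈ p.support}) (Sq := {z | z ∈ q.support}) r
      p.end_mem_support q.end_mem_support hrsub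
  rcases hcase with rfl | hadj
  · exact ⟨x, hxp, hyq, hxr⟩
  · by_cases hyp : y ∈ p.support
    · exact ⟨y, hyp, hyq, hyr⟩
    · have hW : ((p.takeUntil x hxp).append (Walk.cons hadj Walk.nil)).IsPath := by
        apply aux_isPath_append (hp.takeUntil hxp)
        · rw [Walk.isPath_def]
          simp [hadj.ne]
        · intro z hz1 hz2
          simp only [Walk.support_cons, Walk.support_nil, List.mem_cons,
            List.mem_singleton, List.not_mem_nil, or_false] at hz2
          rcases hz2 with rfl | rfl
          · rfl
          · exact absurd (p.support_takeUntil_subset hxp hz1) hyp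
      have heq : (⟨(p.takeUntil x hxp).append (Walk.cons hadj Walk.nil), hW⟩ : T.Path a y)
          = ⟨q.takeUntil y hyq, hq.takeUntil hyq⟩ := hT.path_unique _ _
      have hxW : x ∈ ((p.takeUntil x hxp).append (Walk.cons hadj Walk.nil)).support := by
        rw [Walk.mem_support_append_iff]
        exact Or.inl (p.takeUntil x hxp).end_mem_support
      have hxq : x ∈ (q.takeUntil y hyq).support := by
        have := congrArg (fun z : T.Path a y => (z : T.Walk a y)) heq
        simp only at this
        rwa [this] at hxW
      exact ⟨x, hxp, q.support_takeUntil_subset hyq hxq, hxr⟩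

/-- Helly property for three convex sets in a tree. -/
lemma aux_helly_three (hT : T.IsAcyclic) (hconnT : T.Preconnected) {A B C : Set ι}
    (hA : TConv T A) (hB : TConv T B) (hC : TConv T C)
    (hAB : (A ∩ B).Nonempty) (hAC : (A ∩ C).Nonempty) (hBC : (B ∩ C).Nonempty) :
    ∃ m, m ∈ A ∧ m ∈ B ∧ m ∈ C := by
  classical
  obtain ⟨a, haB, haC⟩ := hBC
  obtain ⟨b, hbA, hbC⟩ := hAC
  obtain ⟨c, hcA, hcB⟩ := hAB
  obtain ⟨w1⟩ := hconnT a b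
  obtain ⟨w2⟩ := hconnT a c
  obtain ⟨w3⟩ := hconnT b c
  obtain ⟨m, h1, h2, h3⟩ := aux_median hT w1.toPath.prop w2.toPath.prop w3.toPath.prop
  exact ⟨m, hA b hbA c hcA _ w3.toPath.prop m h3,
    hB a haB c hcB _ w2.toPath.prop m h2,
    hC a haC b hbC _ w1.toPath.prop m h1⟩

/-- Helly property for finite families of convex sets in a tree. -/
lemma aux_helly (hT : T.IsAcyclic) (hconnT : T.Preconnected) :
    ∀ (n : ℕ) (F : Finset (Set ι)), F.card ≤ n → F.Nonempty → (∀ s ∈ F, TConv T s) →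
      (∀ s ∈ F, ∀ s' ∈ F, (s ∩ s').Nonempty) → ∃ t, ∀ s ∈ F, t ∈ s := by
  classical
  intro n
  induction n with
  | zero =>
    intro F hcard hne _ _
    obtain ⟨s, hs⟩ := hne
    simp [Finset.card_eq_zero.mp (Nat.le_zero.mp hcard)] at hs
  | succ n ih =>
    intro F hcard hne hconv hpair
    by_cases hsingle : ∀ A ∈ F, ∀ B ∈ F, A = B
    · obtain ⟨A, hA⟩ := hne
      obtain ⟨t, ht, _⟩ := hpair A hA A hA
      exact ⟨t, fun s hs => (hsingle s hs A hA) ▸ ht⟩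
    · push_neg at hsingle
      obtain ⟨A, hA, B, hB, hAB⟩ := hsingle
      set F' := insert (A ∩ B) ((F.erase A).erase B) with hF'
      have hsub : ∀ s ∈ F', s = A ∩ B ∨ s ∈ F := by
        intro s hs
        rcases Finset.mem_insert.mp hs with h | h
        · exact Or.inl h
        · exact Or.inr (Finset.mem_of_mem_erase (Finset.mem_of_mem_erase h))
      have hcard' : F'.card ≤ n := by
        have hBe : B ∈ F.erase A := Finset.mem_erase.mpr ⟨hAB.symm, hB⟩
        have h1 : ((F.erase A).erase B).card = F.card - 2 := by
          rw [Finset.card_erase_of_mem hBe, Finset.card_erase_of_mem hA]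
          omega
        have h2 : F'.card ≤ ((F.erase A).erase B).card + 1 := by
          rw [hF']
          exact Finset.card_insert_le _ _
        have hF2 : 1 < F.card := Finset.one_lt_card.mpr ⟨A, hA, B, hB, hAB⟩
        omega
      have hconv' : ∀ s ∈ F', TConv T s := by
        intro s hs
        rcases hsub s hs with rfl | h
        · intro a ha b hb p hp x hx
          exact ⟨hconv A hA a ha.1 b hb.1 p hp x hx, hconv B hB a ha.2 b hb.2 p hp x hx⟩
        · exact hconv s h
      have hpair' : ∀ s ∈ F', ∀ s' ∈ F', (s ∩ s').Nonempty := by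
        intro s hs s' hs'
        rcases hsub s hs with rfl | h
        · rcases hsub s' hs' with rfl | h'
          · obtain ⟨m, hm⟩ := hpair A hA B hB
            exact ⟨m, hm, hm⟩
          · obtain ⟨m, hmA, hmB, hmC⟩ := aux_helly_three hT hconnT (hconv A hA)
              (hconv B hB) (hconv s' h') (hpair A hA B hB) (hpair A hA s' h')
              (hpair B hB s' h')
            exact ⟨m, ⟨hmA, hmB⟩, hmC⟩
        · rcases hsub s' hs' with rfl | h'
          · obtain ⟨m, hmA, hmB, hmC⟩ := aux_helly_three hT hconnT (hconv A hA)
              (hconv B hB) (hconv s h) (hpair A hA B hB) (hpair A hA s h)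
              (hpair B hB s h)
            exact ⟨m, hmC, hmA, hmB⟩
          · exact hpair s h s' h'
      have hne' : F'.Nonempty := ⟨A ∩ B, Finset.mem_insert_self _ _⟩
      obtain ⟨t, ht⟩ := ih F' hcard' hne' hconv' hpair'
      have htAB := ht (A ∩ B) (Finset.mem_insert_self _ _)
      refine ⟨t, fun s hs => ?_⟩
      by_cases hsA : s = A
      · exact hsA ▸ htAB.1
      by_cases hsB : s = B
      · exact hsB ▸ htAB.2
      exact ht s (Finset.mem_insert_of_mem
        (Finset.mem_erase.mpr ⟨hsB, Finset.mem_erase.mpr ⟨hsA, hs⟩⟩))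

end Tree

section Decomp

variable {V ι : Type*} {G : SimpleGraph V} {T : SimpleGraph ι}

lemma aux_good_bag (D : TreeDecomp G T) (v : V) : TGood T {t | v ∈ D.bag t} := by
  intro a ha b hb
  obtain ⟨w⟩ := D.bag_conn v ⟨a, ha⟩ ⟨b, hb⟩
  refine ⟨w.map (SimpleGraph.Embedding.induce {t | v ∈ D.bag t}).toHom, ?_⟩
  intro x hx
  have hx' : x ∈ (w.map (SimpleGraph.Embedding.induce {t | v ∈ D.bag t}).toHom).support := hx
  rw [Walk.support_map, List.mem_map] at hx'
  obtain ⟨y, _, rfl⟩ := hx'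
  exact y.2

lemma aux_good_walkset (D : TreeDecomp G T) : ∀ {u v : V} (p : G.Walk u v),
    TGood T {t | ∃ x ∈ D.bag t, x ∈ p.support} := by
  intro u v p
  induction p with
  | @nil w =>
    have hset : {t | ∃ x ∈ D.bag t, x ∈ (Walk.nil : G.Walk w w).support}
        = {t | w ∈ D.bag t} := by
      ext t
      simp
    rw [hset]
    exact aux_good_bag D w
  | @cons u w v hadj p ih =>
    obtain ⟨t₀, ht₀u, ht₀w⟩ := D.bag_edge hadj
    have hset : {t | ∃ x ∈ D.bag t, x ∈ (Walk.cons hadj p).support}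
        = {t | u ∈ D.bag t} ∪ {t | ∃ x ∈ D.bag t, x ∈ p.support} := by
      ext t
      simp only [Walk.support_cons, List.mem_cons, Set.mem_setOf_eq, Set.mem_union]
      constructor
      · rintro ⟨x, hx, rfl | hx2⟩
        · exact Or.inl hx
        · exact Or.inr ⟨x, hx, hx2⟩
      · rintro (h | ⟨x, hx, hx2⟩)
        · exact ⟨u, h, Or.inl rfl⟩
        · exact ⟨x, hx, Or.inr hx2⟩
    rw [hset]
    exact (aux_good_bag D u).union ih ⟨t₀, ht₀u, ⟨w, ht₀w, p.start_mem_support⟩⟩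

end Decomp

/-- For any tree decomposition of a finite connected graph `G`, some bag is a longest
path transversal of `G`. -/
theorem exists_bag_transversal {V ι : Type*} [Fintype V] [Fintype ι]
    (G : SimpleGraph V) (T : SimpleGraph ι) (hconn : G.Connected)
    (D : TreeDecomp G T) :
    ∃ t : ι, ∀ ⦃u v : V⦄ (p : G.Walk u v), IsLongestPath G p →
      ∃ x ∈ D.bag t, x ∈ p.support := by
  classical
  have hacyc : T.IsAcyclic := D.isTree.2
  have hconnT : T.Preconnected := D.isTree.1.preconnected
  by_cases hex : ∃ (u : V) (v : V) (p : G.Walk u v), IsLongestPath G p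
  · have hfin : ({s : Set ι | ∃ (u v : V) (p : G.Walk u v), IsLongestPath G p ∧
        s = {t | ∃ x ∈ D.bag t, x ∈ p.support}}).Finite := Set.toFinite _
    set F := hfin.toFinset with hF
    have hmemF : ∀ s, s ∈ F ↔ ∃ (u v : V) (p : G.Walk u v), IsLongestPath G p ∧
        s = {t | ∃ x ∈ D.bag t, x ∈ p.support} := fun s => hfin.mem_toFinset
    have hne : F.Nonempty := by
      obtain ⟨u, v, p, hp⟩ := hex
      exact ⟨_, (hmemF _).mpr ⟨u, v, p, hp, rfl⟩⟩
    have hconv : ∀ s ∈ F, TConv T s := by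
      intro s hs
      obtain ⟨u, v, p, _, rfl⟩ := (hmemF s).mp hs
      exact (aux_good_walkset D p).tconv hacyc
    have hpair : ∀ s ∈ F, ∀ s' ∈ F, (s ∩ s').Nonempty := by
      intro s hs s' hs'
      obtain ⟨u, v, p, hp, rfl⟩ := (hmemF s).mp hs
      obtain ⟨u', v', q, hq, rfl⟩ := (hmemF s').mp hs'
      obtain ⟨z, hzp, hzq⟩ := aux_longest_paths_intersect hconn hp hq
      obtain ⟨t, ht⟩ := D.bag_cover z
      exact ⟨t, ⟨z, ht, hzp⟩, ⟨z, ht, hzq⟩⟩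
    obtain ⟨t, ht⟩ := aux_helly hacyc hconnT F.card F le_rfl hne hconv hpair
    refine ⟨t, fun u v p hp => ?_⟩
    exact ht _ ((hmemF _).mpr ⟨u, v, p, hp, rfl⟩)
  · obtain ⟨t⟩ := D.isTree.1.nonempty
    exact ⟨t, fun u v p hp => absurd ⟨u, v, p, hp⟩ hex⟩
end
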